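/- arXiv:2207.11811 — 7 statements merged into one kernel-verified Lean document; each statement's English description precedes it below -/
import Mathlib

section
/- For every even integer n greater than four, the 3-uniform hypergraph based on the cycle C_n is minimal non-metric: it is not metric, but every proper induced subhypergraph of it is metric. -/
universe u

/-- A function `d` is a metric (distance function) on `α`. -/
structure IsMetric {α : Type*} (d : α → α → ℝ) : Prop where
  eq_iff : ∀ x y, d x y = 0 ↔ x = y
  symm : ∀ x y, d x y = d y x
  triangle : ∀ x y z, d x z ≤ d x y + d y z

/-- `[u v w]`: the points are pairwise distinct and `v` lies between `u` and `w`. -/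
def MBtw {α : Type*} (d : α → α → ℝ) (u v w : α) : Prop :=
  u ≠ v ∧ u ≠ w ∧ v ≠ w ∧ d u v + d v w = d u w

/-- The hyperedge set `E_M` associated with a metric space: all triples
`{x,y,z}` such that one of the three points is between the other two. -/
def metricEdges {α : Type*} (d : α → α → ℝ) : Set (Set α) :=
  {s | ∃ u v w : α, s = {u, v, w} ∧ MBtw d u v w}

/-- A 3-uniform hypergraph (given by its hyperedge set on vertex type `V`)
is metric if there is a metric space on ground set `V` with `E = E_M`. -/
def IsMetricHypergraph {V : Type*} (E : Set (Set V)) : Prop :=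
  ∃ d : V → V → ℝ, IsMetric d ∧ E = metricEdges d

/-- The hypergraph based on a graph `G`: the vertex set is `V ∪ {x}` (here
`Option V`, with `none` playing the role of the extra point `x`); the
hyperedges are all three-point subsets of `V` together with all sets
`{x,u,v}` with `{u,v}` an edge of `G`. -/
def basedOn {V : Type*} (G : SimpleGraph V) : Set (Set (Option V)) :=
  {s | (∃ u v w : V, u ≠ v ∧ u ≠ w ∧ v ≠ w ∧ s = {some u, some v, some w}) ∨
       (∃ u v : V, G.Adj u v ∧ s = {none, some u, some v})}

/-- The hyperedge set of the subhypergraph induced on `U`. -/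
def inducedEdges {V : Type*} (E : Set (Set V)) (U : Set V) : Set (Set U) :=
  {s | Subtype.val '' s ∈ E}

/-- The line `L_M(xy)` determined by two points of a metric space. -/
def lineOf {α : Type*} (d : α → α → ℝ) (x y : α) : Set α :=
  {x, y} ∪ {z | ({x, y, z} : Set α) ∈ metricEdges d}

/-- `e` is a two-point set forming an edge of `G`. -/
def IsEdgePair {V : Type*} (G : SimpleGraph V) (e : Set V) : Prop :=
  ∃ u v : V, G.Adj u v ∧ e = {u, v}

/-- The equivalence relation `≡_G`: two pairs are equivalent iff both are
edges of `G` or both are non-edges of `G`. -/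
def graphEquiv {V : Type*} (G : SimpleGraph V) (e f : Set V) : Prop :=
  (IsEdgePair G e ∧ IsEdgePair G f) ∨ (¬ IsEdgePair G e ∧ ¬ IsEdgePair G f)

/-- A relation `r` on two-point subsets of `V` is an obstacle if no metric
space on a superset `W` of `V` has `L_M(ab) = L_M(cd) ↔ {a,b} r {c,d}`
for all two-point subsets `{a,b}`, `{c,d}` of `V`. -/
def IsObstacle {V : Type u} (r : Set V → Set V → Prop) : Prop :=
  ¬ ∃ (W : Type u) (f : V ↪ W) (d : W → W → ℝ), IsMetric d ∧
      ∀ a b c e : V, a ≠ b → c ≠ e →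
        (lineOf d (f a) (f b) = lineOf d (f c) (f e) ↔ r {a, b} {c, e})

/-- The restriction of a relation on two-point subsets of `V` to the
two-point subsets of `U ⊆ V`. -/
def restrictRel {V : Type*} (r : Set V → Set V → Prop) (U : Set V) :
    Set U → Set U → Prop :=
  fun e f => r (Subtype.val '' e) (Subtype.val '' f)

open scoped Fin.CommRing Fin.NatCast

lemma IsMetric.nonneg {α : Type*} {d : α → α → ℝ} (hm : IsMetric d) (x y : α) :
    0 ≤ d x y := by
  have h := hm.triangle x y x
  rw [(hm.eq_iff x x).mpr rfl, hm.symm y x] at h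
  linarith

set_option maxHeartbeats 1000000 in
lemma triple_perm {α : Type*} {x y z u v w : α}
    (h : ({x, y, z} : Set α) = {u, v, w}) (h1 : u ≠ v) (h2 : u ≠ w) (h3 : v ≠ w)
    (g1 : x ≠ y) (g2 : x ≠ z) (g3 : y ≠ z) :
    (x = u ∧ ((y = v ∧ z = w) ∨ (y = w ∧ z = v))) ∨
    (x = v ∧ ((y = u ∧ z = w) ∨ (y = w ∧ z = u))) ∨
    (x = w ∧ ((y = u ∧ z = v) ∨ (y = v ∧ z = u))) := by
  have hx : x ∈ ({u, v, w} : Set α) := by rw [← h]; simp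
  have hy : y ∈ ({u, v, w} : Set α) := by rw [← h]; simp
  have hz : z ∈ ({u, v, w} : Set α) := by rw [← h]; simp
  have hu : u ∈ ({x, y, z} : Set α) := by rw [h]; simp
  have hv : v ∈ ({x, y, z} : Set α) := by rw [h]; simp
  have hw : w ∈ ({x, y, z} : Set α) := by rw [h]; simp
  simp only [Set.mem_insert_iff, Set.mem_singleton_iff] at hx hy hz hu hv hw
  clear h
  rcases hx with rfl|rfl|rfl <;> rcases hy with rfl|rfl|rfl <;>
    rcases hz with rfl|rfl|rfl <;> tauto

lemma mem_metricEdges_iff {α : Type*} {d : α → α → ℝ} (hm : IsMetric d)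
    {x y z : α} (g1 : x ≠ y) (g2 : x ≠ z) (g3 : y ≠ z) :
    ({x, y, z} : Set α) ∈ metricEdges d ↔
      (d x y + d y z = d x z ∨ d y x + d x z = d y z ∨ d x z + d z y = d x y) := by
  constructor
  · rintro ⟨u, v, w, hs, h1, h2, h3, heq⟩
    rcases triple_perm hs h1 h2 h3 g1 g2 g3 with
      ⟨rfl, ⟨rfl, rfl⟩|⟨rfl, rfl⟩⟩ | ⟨rfl, ⟨rfl, rfl⟩|⟨rfl, rfl⟩⟩ | ⟨rfl, ⟨rfl, rfl⟩|⟨rfl, rfl⟩⟩ <;>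
    · have s1 := hm.symm x y; have s2 := hm.symm x z; have s3 := hm.symm y z
      first
      | exact Or.inl (by linarith)
      | exact Or.inr (Or.inl (by linarith))
      | exact Or.inr (Or.inr (by linarith))
  · rintro (h|h|h)
    · exact ⟨x, y, z, rfl, g1, g2, g3, h⟩
    · exact ⟨y, x, z, by rw [Set.insert_comm], g1.symm, g3, g2, h⟩
    · exact ⟨x, z, y, congrArg (insert x) (Set.pair_comm y z), g2, g1, g3.symm, h⟩

lemma abs3 {p q r : ℝ} (h1 : p ≤ q) (h2 : q ≤ r) : |p - q| + |q - r| = |p - r| := by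
  rw [abs_of_nonpos (by linarith), abs_of_nonpos (by linarith), abs_of_nonpos (by linarith)]
  ring

lemma mem_metricEdges_of_abs {α : Type*} {d : α → α → ℝ}
    (hd : ∀ x y, d x y = d y x)
    {a b c : α} {pa pb pc : ℝ} (hab : d a b = |pa - pb|) (hac : d a c = |pa - pc|)
    (hbc : d b c = |pb - pc|) (h1 : a ≠ b) (h2 : a ≠ c) (h3 : b ≠ c) :
    ({a, b, c} : Set α) ∈ metricEdges d := by
  have hba : d b a = |pa - pb| := by rw [hd b a, hab]
  have hca : d c a = |pa - pc| := by rw [hd c a, hac]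
  have hcb : d c b = |pb - pc| := by rw [hd c b, hbc]
  have e1 : ({a, b, c} : Set α) = {a, c, b} := by ext t; simp; tauto
  have e2 : ({a, b, c} : Set α) = {b, a, c} := by ext t; simp; tauto
  have e3 : ({a, b, c} : Set α) = {b, c, a} := by ext t; simp; tauto
  have e4 : ({a, b, c} : Set α) = {c, a, b} := by ext t; simp; tauto
  have e5 : ({a, b, c} : Set α) = {c, b, a} := by ext t; simp; tauto
  rcases le_total pa pb with u1 | u1 <;> rcases le_total pb pc with u2 | u2 <;>
    rcases le_total pa pc with u3 | u3
  · exact ⟨a, b, c, rfl, h1, h2, h3, by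
      simp only [hab, hac, hbc, hba, hca, hcb]
      rw [abs_of_nonpos (by linarith), abs_of_nonpos (by linarith),
        abs_of_nonpos (by linarith)]; ring⟩
  · exact ⟨a, b, c, rfl, h1, h2, h3, by
      simp only [hab, hac, hbc, hba, hca, hcb]
      rw [abs_of_nonpos (by linarith), abs_of_nonpos (by linarith),
        abs_of_nonpos (by linarith)]; ring⟩
  · exact ⟨a, c, b, e1, h2, h1, h3.symm, by
      simp only [hab, hac, hbc, hba, hca, hcb]
      rw [abs_of_nonpos (by linarith), abs_of_nonneg (by linarith),
        abs_of_nonpos (by linarith)]; ring⟩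
  · exact ⟨c, a, b, e4, h2.symm, h3.symm, h1, by
      simp only [hab, hac, hbc, hba, hca, hcb]
      rw [abs_of_nonneg (by linarith), abs_of_nonpos (by linarith),
        abs_of_nonneg (by linarith)]; ring⟩
  · exact ⟨b, a, c, e2, h1.symm, h3, h2, by
      simp only [hab, hac, hbc, hba, hca, hcb]
      rw [abs_of_nonneg (by linarith), abs_of_nonpos (by linarith),
        abs_of_nonpos (by linarith)]; ring⟩
  · exact ⟨b, c, a, e3, h3, h1.symm, h2.symm, by
      simp only [hab, hac, hbc, hba, hca, hcb]
      rw [abs_of_nonpos (by linarith), abs_of_nonneg (by linarith),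
        abs_of_nonneg (by linarith)]; ring⟩
  · exact ⟨c, b, a, e5, h3.symm, h2.symm, h1.symm, by
      simp only [hab, hac, hbc, hba, hca, hcb]
      rw [abs_of_nonneg (by linarith), abs_of_nonneg (by linarith),
        abs_of_nonneg (by linarith)]; ring⟩
  · exact ⟨c, b, a, e5, h3.symm, h2.symm, h1.symm, by
      simp only [hab, hac, hbc, hba, hca, hcb]
      rw [abs_of_nonneg (by linarith), abs_of_nonneg (by linarith),
        abs_of_nonneg (by linarith)]; ring⟩

lemma image_eq_triple {β γ : Type*} {g : β → γ} (hg : Function.Injective g)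
    {s : Set β} {x y z : γ} (h : g '' s = {x, y, z}) :
    ∃ a b c : β, s = {a, b, c} ∧ g a = x ∧ g b = y ∧ g c = z := by
  have hx : x ∈ g '' s := by rw [h]; simp
  have hy : y ∈ g '' s := by rw [h]; simp
  have hz : z ∈ g '' s := by rw [h]; simp
  obtain ⟨a, ha, hax⟩ := hx
  obtain ⟨b, hb, hby⟩ := hy
  obtain ⟨c, hc, hcz⟩ := hz
  refine ⟨a, b, c, ?_, hax, hby, hcz⟩
  apply Set.eq_of_subset_of_subset
  · intro t ht
    have : g t ∈ g '' s := ⟨t, ht, rfl⟩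
    rw [h] at this
    rcases this with h'|h'|h'
    · left; exact hg (by rw [hax, h'])
    · right; left; exact hg (by rw [hby]; exact h')
    · right; right; exact hg (by rw [hcz]; exact h')
  · rintro t (rfl|rfl|rfl) <;> assumption

lemma image_triple {β γ : Type*} (g : β → γ) (a b c : β) :
    g '' ({a, b, c} : Set β) = {g a, g b, g c} := by
  simp [Set.image_insert_eq]

section Cycle
open SimpleGraph
variable {n : ℕ} [NeZero n]

lemma adj_char (h6 : 6 ≤ n) (u v : Fin n) :
    (cycleGraph n).Adj u v ↔ u = v + 1 ∨ v = u + 1 := by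
  have h1 : (1 : Fin n).val = 1 := by
    rw [Fin.val_one']; exact Nat.mod_eq_of_lt (by omega)
  rw [SimpleGraph.cycleGraph_adj']
  constructor
  · rintro (h | h)
    · left
      have huv : u - v = 1 := Fin.ext (by rw [h1]; exact h)
      rw [sub_eq_iff_eq_add] at huv
      rw [huv, add_comm]
    · right
      have huv : v - u = 1 := Fin.ext (by rw [h1]; exact h)
      rw [sub_eq_iff_eq_add] at huv
      rw [huv, add_comm]
  · rintro (h | h)
    · left; rw [h]; rw [show v + 1 - v = 1 by ring, h1]
    · right; rw [h]; rw [show u + 1 - u = 1 by ring, h1]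

lemma adj_val (h6 : 6 ≤ n) (u v : Fin n) :
    (cycleGraph n).Adj u v ↔
      (u.val = v.val + 1 ∨ v.val = u.val + 1 ∨
        (u.val = 0 ∧ v.val = n - 1) ∨ (v.val = 0 ∧ u.val = n - 1)) := by
  have h1 : (1 : Fin n).val = 1 := by
    rw [Fin.val_one']; exact Nat.mod_eq_of_lt (by omega)
  have key : ∀ a b : Fin n, (a = b + 1) ↔ (a.val = b.val + 1 ∨ (b.val = n - 1 ∧ a.val = 0)) := by
    intro a b
    have hb := b.isLt
    have hval : (b + 1).val = (b.val + 1) % n := by rw [Fin.val_add, h1]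
    rcases Nat.lt_or_ge (b.val + 1) n with h | h
    · rw [Fin.ext_iff, hval, Nat.mod_eq_of_lt h]; omega
    · have hbv : b.val + 1 = n := by omega
      rw [Fin.ext_iff, hval, hbv, Nat.mod_self]; omega
  rw [adj_char h6, key, key]
  have := u.isLt; have := v.isLt
  omega

lemma tri_free (h6 : 6 ≤ n) {a b c : Fin n} (h1 : (cycleGraph n).Adj a b)
    (h2 : (cycleGraph n).Adj b c) (h3 : (cycleGraph n).Adj a c) : False := by
  rw [adj_val h6] at h1 h2 h3
  have := a.isLt; have := b.isLt; have := c.isLt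
  omega

lemma two_nbrs (h6 : 6 ≤ n) {i a b c : Fin n} (h1 : (cycleGraph n).Adj i a)
    (h2 : (cycleGraph n).Adj i b) (h3 : (cycleGraph n).Adj i c)
    (hab : a ≠ b) (hac : a ≠ c) (hbc : b ≠ c) : False := by
  rw [adj_val h6] at h1 h2 h3
  have hab' : a.val ≠ b.val := fun h => hab (Fin.ext h)
  have hac' : a.val ≠ c.val := fun h => hac (Fin.ext h)
  have hbc' : b.val ≠ c.val := fun h => hbc (Fin.ext h)
  have := i.isLt; have := a.isLt; have := b.isLt; have := c.isLt
  omega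

end Cycle

lemma absDsplit {A B C D : ℝ} (h1 : A + B = D) (h2 : |A - C| + |C - B| = D) :
    |A - B| = D ∨ C = 0 ∨ C = D := by
  rcases abs_cases (A - C) with ⟨e1, c1⟩ | ⟨e1, c1⟩ <;>
    rcases abs_cases (C - B) with ⟨e2, c2⟩ | ⟨e2, c2⟩ <;>
    rw [e1, e2] at h2
  · left; rw [abs_of_nonneg (by linarith)]; linarith
  · right; left; linarith
  · right; right; linarith
  · left; rw [abs_of_nonpos (by linarith)]; linarith

lemma stageI {n : ℕ} (h6 : 6 ≤ n) (d' : Fin n → Fin n → ℝ)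
    (hsym : ∀ i j, d' i j = d' j i)
    (h0 : ∀ i j, d' i j = 0 ↔ i = j)
    (htri : ∀ i j k, d' i k ≤ d' i j + d' j k)
    (hlin : ∀ i j k, i ≠ j → i ≠ k → j ≠ k →
      d' i j + d' j k = d' i k ∨ d' j i + d' i k = d' j k ∨ d' i k + d' k j = d' i j) :
    ∃ f : Fin n → ℝ, ∀ i j, d' i j = |f i - f j| := by
  haveI : NeZero n := ⟨by omega⟩
  have hnonneg : ∀ i j, 0 ≤ d' i j := fun i j => by
    have h := htri i j i
    rw [(h0 i i).mpr rfl, hsym j i] at h; linarith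
  have hpos : ∀ i j, i ≠ j → 0 < d' i j := fun i j h =>
    lt_of_le_of_ne (hnonneg i j) (fun e => h ((h0 i j).mp e.symm))
  obtain ⟨pq, -, hmax⟩ := Finset.exists_max_image (Finset.univ ×ˢ Finset.univ)
    (fun p : Fin n × Fin n => d' p.1 p.2) ⟨((0 : Fin n), (0 : Fin n)), by simp⟩
  obtain ⟨p, q⟩ := pq
  have hmax' : ∀ i j, d' i j ≤ d' p q := fun i j => hmax (i, j) (by simp)
  have h01 : (0 : Fin n) ≠ (1 : Fin n) := by
    intro h
    have h' : (0 : Fin n).val = (1 : Fin n).val := by rw [h]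
    rw [Fin.val_zero, Fin.val_one', Nat.mod_eq_of_lt (show 1 < n by omega)] at h'
    omega
  have hpq : p ≠ q := by
    intro h
    have h1 := hpos 0 1 h01
    have h2 := hmax' 0 1
    rw [h, (h0 q q).mpr rfl] at h2
    linarith
  have hDpos : 0 < d' p q := lt_of_lt_of_le (hpos 0 1 h01) (hmax' 0 1)
  set D := d' p q with hD
  set f : Fin n → ℝ := fun w => d' p w with hfdef
  have hfp : f p = 0 := (h0 p p).mpr rfl
  have hfq : f q = D := rfl
  have hfub : ∀ w, f w ≤ D := fun w => hmax' p w
  have hflb : ∀ w, 0 ≤ f w := fun w => hnonneg p w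
  have stepA : ∀ w, f w + d' w q = D := by
    intro w
    by_cases hwp : w = p
    · rw [hwp, hfp]; linarith [hD]
    by_cases hwq : w = q
    · rw [hwq, (h0 q q).mpr rfl]; linarith [hfq]
    rcases hlin p w q (fun h => hwp h.symm) hpq hwq with h | h | h
    · exact h
    · exact absurd h (by
        have h1 := hmax' w q
        have h2 := hpos w p hwp
        intro h'
        rw [hsym w p] at h'
        have : f w ≤ 0 := by rw [hfdef]; simp only; linarith
        have : (0:ℝ) < f w := by rw [hfdef]; simp only; rw [hsym p w]; linarith
        linarith)
    · exact absurd h (by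
        have h1 := hmax' p w
        have h2 := hpos q w (fun h => hwq h.symm)
        intro h'
        linarith)
  have fzero : ∀ w, f w = 0 → w = p := fun w h => ((h0 p w).mp h).symm
  have fD : ∀ w, f w = D → w = q := by
    intro w h
    have h2 := stepA w
    rw [h] at h2
    have : d' w q = 0 := by linarith
    exact (h0 w q).mp this
  have stepB : ∀ u v, u ≠ v →
      d' u v = |f u - f v| ∨ (f u + f v = D ∧ d' u v = D) := by
    intro u v huv
    by_cases hup : u = p
    · left
      rw [hup, hfp, zero_sub, abs_neg, abs_of_nonneg (hflb v)]
    by_cases hvp : v = p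
    · left
      rw [hvp, hfp, sub_zero, abs_of_nonneg (hflb u), hsym u p]
    by_cases huq : u = q
    · left
      have h2 := stepA v
      rw [huq, hfq, abs_of_nonneg (by linarith [hfub v]), hsym q v]
      linarith
    by_cases hvq : v = q
    · left
      have h2 := stepA u
      rw [hvq, hfq, abs_of_nonpos (by linarith [hfub u])]
      linarith
    rcases hlin p u v (fun h => hup h.symm) (fun h => hvp h.symm) huv with h | h | h
    · -- f u + d' u v = f v
      left
      rw [abs_of_nonpos (by linarith [hnonneg u v])]
      linarith
    · -- d' u v = f u + f v
      have huv2 : d' u v = f u + f v := by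
        rw [hsym u p] at h
        have : f u + d' p v = d' u v := h
        linarith [show f v = d' p v from rfl]
      rcases hlin q u v (fun h => huq h.symm) (fun h => hvq h.symm) huv with h' | h' | h'
      · exfalso
        have e1 := stepA u; have e2 := stepA v
        rw [hsym q u] at h'
        have : f v = 0 := by linarith [hsym q v, show d' q v = d' v q from hsym q v]
        exact hvp (fzero v this)
      · right
        have e1 := stepA u; have e2 := stepA v
        have hqv : d' q v = d' v q := hsym q v
        constructor <;> linarith
      · exfalso
        have e1 := stepA u; have e2 := stepA v
        have hqv : d' q v = d' v q := hsym q v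
        have hvu : d' v u = d' u v := hsym v u
        have hqu : d' q u = d' u q := hsym q u
        have : f u = 0 := by linarith
        exact hup (fzero u this)
    · -- f v + d' v u = f u
      left
      have hvu : d' v u = d' u v := hsym v u
      rw [abs_of_nonneg (by linarith [hnonneg u v])]
      linarith
  have stepC : ∀ u v, u ≠ v → d' u v = |f u - f v| := by
    intro u v huv
    rcases stepB u v huv with h | ⟨hsum, hD'⟩
    · exact h
    have hex : ∃ w : Fin n, w ∉ ({p, q, u, v} : Finset (Fin n)) := by
      by_contra hcon
      push_neg at hcon
      have hc : (Finset.univ : Finset (Fin n)).card ≤ ({p, q, u, v} : Finset (Fin n)).card :=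
        Finset.card_le_card (fun w _ => hcon w)
      have c1 := Finset.card_insert_le p ({q, u, v} : Finset (Fin n))
      have c2 := Finset.card_insert_le q ({u, v} : Finset (Fin n))
      have c3 := Finset.card_insert_le u ({v} : Finset (Fin n))
      rw [Finset.card_univ, Fintype.card_fin] at hc
      rw [Finset.card_singleton] at c3
      omega
    obtain ⟨w, hw⟩ := hex
    simp only [Finset.mem_insert, Finset.mem_singleton, not_or] at hw
    obtain ⟨hwp, hwq, hwu, hwv⟩ := hw
    have hbtw : d' u w + d' w v = d' u v := by
      rcases hlin u w v (fun h => hwu h.symm) huv hwv with h | h | h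
      · exact h
      · exfalso
        have h1 := hmax' w v
        have h2 := hpos w u hwu
        have hwu2 : d' w u = d' u w := hsym w u
        rw [hD'] at h
        linarith
      · exfalso
        have h1 := hmax' u w
        have h2 := hpos v w (fun h => hwv h.symm)
        have hvw : d' v w = d' w v := hsym v w
        rw [hD'] at h
        linarith
    rcases stepB u w (fun h => hwu h.symm) with h1 | ⟨hs1, hd1⟩ <;>
      rcases stepB w v hwv with h2 | ⟨hs2, hd2⟩
    · rw [h1, h2] at hbtw
      rw [hD'] at hbtw ⊢
      rcases absDsplit hsum hbtw with h | h | h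
      · exact h.symm
      · exact absurd (fzero w h) hwp
      · exact absurd (fD w h) hwq
    · exfalso
      have hfw : f w = f u := by linarith
      rw [h1, hfw, sub_self, abs_zero, hd2, hD'] at hbtw
      have := hpos u w (fun h => hwu h.symm)
      rw [h1, hfw, sub_self, abs_zero] at this
      exact lt_irrefl 0 this
    · exfalso
      have hfw : f w = f v := by linarith
      rw [h2, hfw, sub_self, abs_zero, hd1, hD'] at hbtw
      have := hpos w v hwv
      rw [h2, hfw, sub_self, abs_zero] at this
      exact lt_irrefl 0 this
    · exfalso
      rw [hd1, hd2, hD'] at hbtw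
      linarith
  refine ⟨f, fun i j => ?_⟩
  by_cases hij : i = j
  · rw [hij, (h0 j j).mpr rfl, sub_self, abs_zero]
  · exact stepC i j hij

section Cycle2
open SimpleGraph
variable {n : ℕ} [NeZero n]

lemma fin_one_ne_zero (h6 : 6 ≤ n) : (1 : Fin n) ≠ 0 := by
  intro h
  have h' := congrArg Fin.val h
  rw [Fin.val_one', Fin.val_zero, Nat.mod_eq_of_lt (show 1 < n by omega)] at h'
  omega

lemma fin_two_ne_zero (h6 : 6 ≤ n) : (1 : Fin n) + 1 ≠ 0 := by
  intro h
  have h' := congrArg Fin.val h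
  rw [Fin.val_add, Fin.val_one', Fin.val_zero,
    Nat.mod_eq_of_lt (show 1 < n by omega)] at h'
  rw [Nat.mod_eq_of_lt (show 1 + 1 < n by omega)] at h'
  omega

lemma adj_add_one (h6 : 6 ≤ n) (x : Fin n) : (cycleGraph n).Adj x (x + 1) :=
  (adj_char h6 x (x + 1)).mpr (Or.inr rfl)

lemma adj_sub_one (h6 : 6 ≤ n) (x : Fin n) : (cycleGraph n).Adj x (x - 1) :=
  (adj_char h6 x (x - 1)).mpr (Or.inl (by ring))

end Cycle2

lemma stageII {n : ℕ} (h6 : 6 ≤ n) (heven : 2 ∣ n) (ℓ r : Fin n → ℝ)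
    (H1 : ∀ i, ℓ i < r i)
    (H2 : ∀ i j, 0 ≤ (ℓ i - ℓ j) * (r i - r j))
    (H3 : ∀ i j, i ≠ j → ℓ i ≤ r j)
    (H4 : ∀ i j, (SimpleGraph.cycleGraph n).Adj i j →
      (ℓ i = ℓ j ∨ r i = r j ∨ r i = ℓ j ∨ ℓ i = r j))
    (H5 : ∀ i j, i ≠ j → ¬ (SimpleGraph.cycleGraph n).Adj i j →
      (ℓ i ≠ ℓ j ∧ r i ≠ r j ∧ r i ≠ ℓ j ∧ ℓ i ≠ r j))
    (H6 : ∀ i j, i ≠ j → ℓ i + r i ≠ ℓ j + r j) : False := by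
  haveI : NeZero n := ⟨by omega⟩
  set G := SimpleGraph.cycleGraph n with hG
  set f : Fin n → ℝ := fun i => ℓ i + r i with hf
  have co : ∀ i j, i ≠ j → (ℓ i = ℓ j ∨ r i = r j ∨ r i = ℓ j ∨ ℓ i = r j) → G.Adj i j := by
    intro i j hij h
    by_contra hA
    obtain ⟨c1, c2, c3, c4⟩ := H5 i j hij hA
    tauto
  have L1 : ∀ i j, f i < f j → ℓ i ≤ ℓ j ∧ r i ≤ r j := by
    intro i j hfij
    constructor
    · by_contra hc
      push_neg at hc
      have h1 : (0:ℝ) < ℓ i - ℓ j := by linarith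
      have h2 : r i - r j < 0 := by
        have : f i = ℓ i + r i := rfl
        have : f j = ℓ j + r j := rfl
        simp only [hf] at hfij
        linarith
      nlinarith [H2 i j]
    · by_contra hc
      push_neg at hc
      have h1 : (0:ℝ) < r i - r j := by linarith
      have h2 : ℓ i - ℓ j < 0 := by
        simp only [hf] at hfij
        linarith
      nlinarith [H2 i j]
  have ft : ∀ i j, G.Adj i j → r i = ℓ j → f i < f j := by
    intro i j _ h
    simp only [hf]
    have := H1 i; have := H1 j
    linarith
  have L5 : ∀ i j k, G.Adj i j → r i = ℓ j → k ≠ i → k ≠ j → f k < f i →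
      r k = r i ∧ G.Adj k i := by
    intro i j k hA ht hki hkj hfk
    have h1 : r i ≤ r k := by
      have := H3 j k (fun h => hkj h.symm)
      linarith [ht]
    have h2 : r k ≤ r i := (L1 k i hfk).2
    have hrk : r k = r i := le_antisymm h2 h1
    exact ⟨hrk, co k i hki (Or.inr (Or.inl hrk))⟩
  have L6 : ∀ i j k, G.Adj i j → r i = ℓ j → k ≠ i → k ≠ j → f j < f k →
      ℓ k = ℓ j ∧ G.Adj k j := by
    intro i j k hA ht hki hkj hfk
    have h1 : ℓ k ≤ ℓ j := by
      have := H3 k i hki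
      linarith [ht]
    have h2 : ℓ j ≤ ℓ k := (L1 j k hfk).1
    have hlk : ℓ k = ℓ j := le_antisymm h1 h2
    exact ⟨hlk, co k j hkj (Or.inl hlk)⟩
  -- the "all four distinct" case of touch uniqueness
  have key : ∀ i j i' j' : Fin n, G.Adj i j → r i = ℓ j → G.Adj i' j' → r i' = ℓ j' →
      i ≠ i' → i ≠ j' → j ≠ i' → j ≠ j' → f i < f i' → False := by
    intro i j i' j' a1 t1 a2 t2 d1 d2 d3 d4 hff
    have hij : i ≠ j := a1.ne
    have hij' : i' ≠ j' := a2.ne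
    obtain ⟨hri, hAii'⟩ := L5 i' j' i a2 t2 d1 d2 hff
    have hlj : ℓ j = ℓ j' := by rw [← t1, ← t2, hri]
    have hAjj' : G.Adj j j' := co j j' d4 (Or.inl hlj)
    set S : Finset (Fin n) := {i, j, i', j'} with hS
    have hmemS : ∀ t : Fin n, t ∈ S ↔ (t = i ∨ t = j ∨ t = i' ∨ t = j') := by
      intro t; simp [hS]
    have hclosed : ∀ s t : Fin n, s ∈ S → G.Adj s t → t ∈ S := by
      intro s t hs hA
      rw [hmemS] at hs ⊢
      by_contra hts
      push_neg at hts
      obtain ⟨e1, e2, e3, e4⟩ := hts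
      rcases hs with rfl | rfl | rfl | rfl
      · exact two_nbrs h6 a1 hAii' hA d3 (fun h => e2 h.symm) (fun h => e3 h.symm)
      · exact two_nbrs h6 a1.symm hAjj' hA d2 (fun h => e1 h.symm) (fun h => e4 h.symm)
      · exact two_nbrs h6 a2 hAii'.symm hA (fun h => d2 h.symm) (fun h => e4 h.symm)
          (fun h => e1 h.symm)
      · exact two_nbrs h6 a2.symm hAjj'.symm hA (fun h => d3 h.symm) (fun h => e3 h.symm)
          (fun h => e2 h.symm)
    have hwalk : ∀ m : ℕ, i + (m : Fin n) ∈ S := by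
      intro m
      induction m with
      | zero => simp [hmemS]
      | succ k ih =>
        have hstep : i + ((k + 1 : ℕ) : Fin n) = (i + (k : Fin n)) + 1 := by
          push_cast; ring
        rw [hstep]
        exact hclosed _ _ ih (adj_add_one h6 _)
    have hinj : Set.InjOn (fun m : ℕ => i + (m : Fin n)) ↑(Finset.range 5) := by
      intro a ha b hb hab
      simp only [Finset.coe_range, Set.mem_Iio] at ha hb
      have h1 : ((a : ℕ) : Fin n) = ((b : ℕ) : Fin n) := add_left_cancel hab
      have h2 := congrArg Fin.val h1
      rw [Fin.val_natCast, Fin.val_natCast, Nat.mod_eq_of_lt (by omega),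
        Nat.mod_eq_of_lt (by omega)] at h2
      exact h2
    have hcard := Finset.card_le_card_of_injOn _ (fun m _ => hwalk m) hinj
    rw [Finset.card_range] at hcard
    have c1 := Finset.card_insert_le i ({j, i', j'} : Finset (Fin n))
    have c2 := Finset.card_insert_le j ({i', j'} : Finset (Fin n))
    have c3 := Finset.card_insert_le i' ({j'} : Finset (Fin n))
    rw [Finset.card_singleton] at c3
    simp only [hS] at hcard
    omega
  -- full touch uniqueness
  have htu : ∀ i j i' j' : Fin n, G.Adj i j → r i = ℓ j → G.Adj i' j' → r i' = ℓ j' →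
      i = i' ∧ j = j' := by
    intro i j i' j' a1 t1 a2 t2
    by_cases hii' : i = i'
    · refine ⟨hii', ?_⟩
      by_cases hjj' : j = j'
      · exact hjj'
      exfalso
      have hlj : ℓ j = ℓ j' := by rw [← t1, hii', t2]
      have hAjj' : G.Adj j j' := co j j' hjj' (Or.inl hlj)
      exact tri_free h6 a1 hAjj' (hii' ▸ a2)
    exfalso
    by_cases hjj' : j = j'
    · have hri : r i = r i' := by rw [t1, hjj', ← t2]
      have hAii' : G.Adj i i' := co i i' hii' (Or.inr (Or.inl hri))
      exact tri_free h6 hAii' (hjj' ▸ a2.symm).symm a1  -- Adj i i', Adj i' j, Adj i j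
    by_cases hij' : i = j'
    · by_cases hji' : j = i'
      · -- r i = ℓ j, r j = ℓ i
        have t2' : r j = ℓ i := by rw [← hji', ← hij'] at t2; exact t2
        have := H1 i; have := H1 j
        linarith [t1, t2']
      · -- i = j', j ≠ i'
        obtain ⟨hl, -⟩ := L6 i' j' j a2 t2 hji' (fun h => hjj' h) (by
          rw [← hij']; exact ft i j a1 t1)
        rw [← hij'] at hl
        have := H1 i
        linarith [t1, hl]
    · by_cases hji' : j = i'
      · -- j = i', i ≠ j'
        obtain ⟨hr, -⟩ := L5 i' j' i a2 t2 (fun h => hii' h) hij' (by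
          rw [← hji']; exact ft i j a1 t1)
        rw [← hji'] at hr
        have := H1 j
        linarith [t1, hr]
      · rcases lt_trichotomy (f i) (f i') with hlt | heq | hgt
        · exact key i j i' j' a1 t1 a2 t2 hii' hij' hji' hjj' hlt
        · exact H6 i i' hii' heq
        · exact key i' j' i j a2 t2 a1 t1 (Ne.symm hii') (Ne.symm hji') (Ne.symm hij')
            (Ne.symm hjj') hgt
  -- main case split: existence of a touch edge
  by_cases hT : ∃ i j : Fin n, G.Adj i j ∧ r i = ℓ j
  · -- touch edge exists: parity argument
    obtain ⟨it, jt, hAt, htt⟩ := hT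
    set δ : Fin n := jt - it with hδdef
    have hδ : δ = 1 ∨ δ = -1 := by
      rcases (adj_char h6 it jt).mp hAt with h | h
      · right; rw [hδdef, h]; ring
      · left; rw [hδdef, h]; ring
    have hδδ : δ * δ = 1 := by rcases hδ with h | h <;> rw [h] <;> ring
    set w : ℕ → Fin n := fun m => it + (m : Fin n) * δ with hw
    have hw0 : w 0 = it := by simp [hw]
    have hw1 : w 1 = jt := by simp [hw, hδdef]
    have hwsucc : ∀ m, w (m + 1) = w m + δ := by
      intro m; simp only [hw]; push_cast; ring
    have hadj : ∀ m, G.Adj (w m) (w (m + 1)) := by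
      intro m
      rw [hwsucc]
      rcases hδ with h | h
      · rw [h]; exact adj_add_one h6 _
      · rw [h]
        exact (adj_char h6 _ _).mpr (Or.inl (by ring))
    have hweq : ∀ m m', w m = w m' ↔ m % n = m' % n := by
      intro m m'
      constructor
      · intro h
        have h2 : ((m : Fin n)) * δ = ((m' : Fin n)) * δ := add_left_cancel h
        have h3 : ((m : Fin n)) * (δ * δ) = ((m' : Fin n)) * (δ * δ) := by
          rw [← mul_assoc, ← mul_assoc, h2]
        rw [hδδ, mul_one, mul_one] at h3
        have h4 := congrArg Fin.val h3
        rw [Fin.val_natCast, Fin.val_natCast] at h4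
        exact h4
      · intro h
        have : ((m : Fin n)) = ((m' : Fin n)) :=
          Fin.ext (by rw [Fin.val_natCast, Fin.val_natCast]; exact h)
        simp only [hw, this]
    have hwn : w n = w 0 := (hweq n 0).mpr (by rw [Nat.mod_self, Nat.zero_mod])
    have hwinj : ∀ m m', m < n → m' < n → w m = w m' → m = m' := by
      intro m m' hm hm' h
      have := (hweq m m').mp h
      rwa [Nat.mod_eq_of_lt hm, Nat.mod_eq_of_lt hm'] at this
    have hnotouch : ∀ m, 1 ≤ m → m ≤ n - 1 →
        r (w m) ≠ ℓ (w (m + 1)) ∧ ℓ (w m) ≠ r (w (m + 1)) := by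
      intro m h1 h2
      constructor
      · intro h
        obtain ⟨e1, -⟩ := htu (w m) (w (m + 1)) it jt (hadj m) h hAt htt
        rw [← hw0] at e1
        have := hwinj m 0 (by omega) (by omega) e1
        omega
      · intro h
        obtain ⟨e1, e2⟩ := htu (w (m + 1)) (w m) it jt (hadj m).symm h.symm hAt htt
        rw [← hw0] at e1
        rw [← hw1] at e2
        have hm1 : (m + 1) % n = 0 % n := (hweq (m + 1) 0).mp e1
        rw [Nat.zero_mod] at hm1
        have hmn : m + 1 = n := by
          rcases Nat.lt_or_ge (m + 1) n with hc | hc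
          · rw [Nat.mod_eq_of_lt hc] at hm1; omega
          · omega
        have := hwinj m 1 (by omega) (by omega) e2
        omega
    have pure : ∀ m, 1 ≤ m → m ≤ n - 1 →
        (ℓ (w m) = ℓ (w (m + 1)) ∨ r (w m) = r (w (m + 1))) := by
      intro m h1 h2
      obtain ⟨c1, c2⟩ := hnotouch m h1 h2
      rcases H4 (w m) (w (m + 1)) (hadj m) with h | h | h | h
      · exact Or.inl h
      · exact Or.inr h
      · exact absurd h c1
      · exact absurd h c2
    have hne2 : ∀ m, m + 2 ≤ n → 1 ≤ m → w m ≠ w (m + 2) := by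
      intro m hm2 hm1 h
      have hh := (hweq m (m + 2)).mp h
      rcases Nat.lt_or_ge (m + 2) n with hc | hc
      · rw [Nat.mod_eq_of_lt (by omega), Nat.mod_eq_of_lt hc] at hh; omega
      · have : m + 2 = n := by omega
        rw [this, Nat.mod_self, Nat.mod_eq_of_lt (by omega)] at hh
        omega
    have hnadj2 : ∀ m, ¬ G.Adj (w m) (w (m + 2)) := by
      intro m h
      exact tri_free h6 (hadj m) (hadj (m + 1)) h
    have alt : ∀ m, 1 ≤ m → m ≤ n - 2 →
        (ℓ (w (m + 1)) = ℓ (w (m + 2)) ↔ ¬ ℓ (w m) = ℓ (w (m + 1))) := by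
      intro m h1 h2
      have hps := pure m h1 (by omega)
      have hps2 := pure (m + 1) (by omega) (by omega)
      obtain ⟨c1, c2, c3, c4⟩ := H5 (w m) (w (m + 2)) (hne2 m (by omega) h1) (hnadj2 m)
      constructor
      · intro hb ha
        exact c1 (ha.trans hb)
      · intro hg
        rcases hps with h | h
        · exact absurd h hg
        rcases hps2 with h' | h'
        · exact h'
        · exact absurd (h.trans h') c2
    -- ends
    have hne02 : w 0 ≠ w 2 := fun h => by
      have := hwinj 0 2 (by omega) (by omega) h; omega
    have end1 : ¬ ℓ (w 1) = ℓ (w 2) := by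
      intro h
      have hc : r (w 0) = ℓ (w 2) := by rw [hw0, htt, ← hw1, h]
      obtain ⟨-, -, c3, -⟩ := H5 (w 0) (w 2) hne02 (hnadj2 0)
      exact c3 hc
    have hn1 : n - 1 + 1 = n := by omega
    have endN : ℓ (w (n - 1)) = ℓ (w (n - 1 + 1)) := by
      rcases pure (n - 1) (by omega) (le_refl _) with h | h
      · exact h
      exfalso
      have hwn' : w (n - 1 + 1) = it := by rw [hn1, hwn, hw0]
      have hc : r (w (n - 1)) = ℓ (w 1) := by rw [h, hwn', htt, hw1]
      have hA1 : G.Adj (w (n - 1)) (w 0) := by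
        have h' := hadj (n - 1); rwa [hn1, hwn] at h'
      have hA2 : G.Adj (w 0) (w 1) := hadj 0
      have hne11 : w (n - 1) ≠ w 1 := fun h' => by
        have := hwinj (n - 1) 1 (by omega) (by omega) h'; omega
      have hnadj11 : ¬ G.Adj (w (n - 1)) (w 1) := fun h' => tri_free h6 hA1 hA2 h'
      obtain ⟨-, -, c3, -⟩ := H5 (w (n - 1)) (w 1) hne11 hnadj11
      exact c3 hc
    have claim : ∀ k, 1 ≤ k → k ≤ n - 1 → (ℓ (w k) = ℓ (w (k + 1)) ↔ k % 2 = 0) := by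
      intro k
      induction k with
      | zero => intro h1 _; exact absurd h1 (by omega)
      | succ k ih =>
        intro h1 h2
        by_cases hk : k = 0
        · rw [hk]
          exact iff_of_false (by rw [show (0:ℕ)+1 = 1 from rfl]; exact end1) (by omega)
        · have hk1 : 1 ≤ k := by omega
          have hIH := ih hk1 (by omega)
          have hAlt := alt k hk1 (by omega)
          rw [hAlt, hIH]
          constructor <;> intro h <;> omega
    have hfin := (claim (n - 1) (by omega) (le_refl _)).mp endN
    obtain ⟨c, hc⟩ := heven
    omega
  · -- no touch edge
    push_neg at hT
    obtain ⟨i0, -, hmin⟩ := Finset.exists_min_image Finset.univ f ⟨0, Finset.mem_univ 0⟩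
    have hminu : ∀ x : Fin n, f i0 ≤ f x := fun x => hmin x (Finset.mem_univ x)
    have hj : G.Adj i0 (i0 + 1) := adj_add_one h6 i0
    have hk : G.Adj i0 (i0 - 1) := adj_sub_one h6 i0
    have hji : i0 + 1 ≠ i0 := by
      intro h
      exact fin_one_ne_zero h6 (add_eq_left.mp h)
    have hki : i0 - 1 ≠ i0 := by
      intro h
      have h3 : i0 - 1 + 1 = i0 := by ring
      have h4 := congrArg (· + 1) h
      rw [h3] at h4
      exact fin_one_ne_zero h6 (add_eq_left.mp h4.symm)
    have hjk : i0 + 1 ≠ i0 - 1 := by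
      intro h
      have h2 : i0 + (1 + 1) = i0 := by
        rw [← add_assoc, h]; ring
      exact fin_two_ne_zero h6 (add_eq_left.mp h2)
    have key2 : ∀ a b c : Fin n, G.Adj a b → G.Adj a c → f a < f b → f b < f c → False := by
      intro a b c hab hac hfab hfbc
      have hbc : b ≠ c := fun h => by rw [h] at hfbc; exact lt_irrefl _ hfbc
      rcases H4 a c hac with h | h | h | h
      · have e1 := (L1 a b hfab).1
        have e2 := (L1 b c hfbc).1
        have : ℓ b = ℓ c := by linarith [h]
        exact tri_free h6 hab (co b c hbc (Or.inl this)) hac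
      · have e1 := (L1 a b hfab).2
        have e2 := (L1 b c hfbc).2
        have : r b = r c := by linarith [h]
        exact tri_free h6 hab (co b c hbc (Or.inr (Or.inl this))) hac
      · exact hT a c hac h
      · exact hT c a hac.symm h.symm
    have hfj : f i0 < f (i0 + 1) :=
      lt_of_le_of_ne (hminu _) (H6 i0 (i0 + 1) (Ne.symm hji))
    have hfk : f i0 < f (i0 - 1) :=
      lt_of_le_of_ne (hminu _) (H6 i0 (i0 - 1) (Ne.symm hki))
    rcases lt_trichotomy (f (i0 + 1)) (f (i0 - 1)) with hlt | heq | hgt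
    · exact key2 i0 (i0 + 1) (i0 - 1) hj hk hfj hlt
    · exact H6 (i0 + 1) (i0 - 1) hjk heq
    · exact key2 i0 (i0 - 1) (i0 + 1) hk hj hfk hgt

lemma part1 {n : ℕ} (h6 : 6 ≤ n) (heven : 2 ∣ n) :
    ¬ IsMetricHypergraph (basedOn (SimpleGraph.cycleGraph n)) := by
  rintro ⟨d, hm, hE⟩
  haveI : NeZero n := ⟨by omega⟩
  have hsome : ∀ i j : Fin n, i ≠ j → (some i : Option (Fin n)) ≠ some j :=
    fun i j h e => h (Option.some_injective _ e)
  have hnone : ∀ i : Fin n, (none : Option (Fin n)) ≠ some i :=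
    fun i h => nomatch h
  set d' : Fin n → Fin n → ℝ := fun i j => d (some i) (some j) with hd'
  set a : Fin n → ℝ := fun i => d none (some i) with ha
  have hd'sym : ∀ i j, d' i j = d' j i := fun i j => hm.symm _ _
  have h0' : ∀ i j : Fin n, d' i j = 0 ↔ i = j := by
    intro i j
    rw [hd']
    simp only
    rw [hm.eq_iff]
    exact ⟨fun h => Option.some_injective _ h, fun h => h ▸ rfl⟩
  have htri' : ∀ i j k, d' i k ≤ d' i j + d' j k := fun i j k => hm.triangle _ _ _
  have lin3 : ∀ i j k : Fin n, i ≠ j → i ≠ k → j ≠ k →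
      d' i j + d' j k = d' i k ∨ d' j i + d' i k = d' j k ∨ d' i k + d' k j = d' i j := by
    intro i j k hij hik hjk
    have hmem : ({some i, some j, some k} : Set (Option (Fin n))) ∈
        basedOn (SimpleGraph.cycleGraph n) := Or.inl ⟨i, j, k, hij, hik, hjk, rfl⟩
    rw [hE] at hmem
    exact (mem_metricEdges_iff hm (hsome i j hij) (hsome i k hik) (hsome j k hjk)).mp hmem
  have adjE : ∀ i j : Fin n, i ≠ j → ((SimpleGraph.cycleGraph n).Adj i j ↔
      (a i + a j = d' i j ∨ a i + d' i j = a j ∨ a j + d' j i = a i)) := by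
    intro i j hij
    have hmem : ({none, some i, some j} : Set (Option (Fin n))) ∈
        basedOn (SimpleGraph.cycleGraph n) ↔ (SimpleGraph.cycleGraph n).Adj i j := by
      constructor
      · rintro (⟨u, v, w, h1, h2, h3, hs⟩ | ⟨u, v, huv, hs⟩)
        · exfalso
          have hmem2 : (none : Option (Fin n)) ∈
              ({some u, some v, some w} : Set (Option (Fin n))) := by rw [← hs]; simp
          simp at hmem2
        · rcases triple_perm hs (hnone u) (hnone v) (hsome u v huv.ne)
            (hnone i) (hnone j) (hsome i j hij) with
            ⟨-, ⟨e1, e2⟩ | ⟨e1, e2⟩⟩ | ⟨e1, -⟩ | ⟨e1, -⟩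
          · rw [Option.some_injective _ e1, Option.some_injective _ e2]; exact huv
          · rw [Option.some_injective _ e1, Option.some_injective _ e2]; exact huv.symm
          · exact absurd e1 (hnone u)
          · exact absurd e1 (hnone v)
      · intro hA; exact Or.inr ⟨i, j, hA, rfl⟩
    rw [← hmem, hE, mem_metricEdges_iff hm (hnone i) (hnone j) (hsome i j hij)]
    have s1 : d (some i) none = a i := hm.symm _ _
    constructor
    · rintro (h | h | h)
      · right; left; exact h
      · left; rw [s1] at h; linarith
      · right; right; exact h
    · rintro (h | h | h)
      · right; left; rw [s1]; linarith
      · left; exact h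
      · right; right; exact h
  obtain ⟨f, hf⟩ := stageI h6 d' hd'sym h0' htri' lin3
  have hd'nonneg : ∀ i j, 0 ≤ d' i j := fun i j => hm.nonneg _ _
  have hapos : ∀ i, 0 < a i := fun i =>
    lt_of_le_of_ne (hm.nonneg none (some i))
      (fun e => (hnone i) ((hm.eq_iff _ _).mp e.symm))
  have e1 : ∀ i j : Fin n, a i - a j ≤ d' i j := by
    intro i j
    have h2 : a i ≤ a j + d' j i := hm.triangle none (some j) (some i)
    have hs : d' j i = d' i j := hd'sym j i
    linarith
  have e3 : ∀ i j : Fin n, d' i j ≤ a i + a j := by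
    intro i j
    have h2 : d' i j ≤ d (some i) none + a j := hm.triangle (some i) none (some j)
    have hs : d (some i) none = a i := hm.symm _ _
    rw [hs] at h2
    exact h2
  have e4 : ∀ i j : Fin n, f i - f j ≤ d' i j := by
    intro i j
    rw [hf i j]
    exact le_abs_self _
  have e5 : ∀ i j : Fin n, d' i j ^ 2 = (f i - f j) ^ 2 := by
    intro i j
    rw [hf i j, sq_abs]
  have finj : ∀ i j : Fin n, i ≠ j → f i ≠ f j := by
    intro i j hij h
    have : d' i j = 0 := by rw [hf i j, h, sub_self, abs_zero]
    exact hij ((h0' i j).mp this)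
  set ℓf : Fin n → ℝ := fun i => f i - a i with hℓf
  set rf : Fin n → ℝ := fun i => f i + a i with hrf
  refine stageII h6 heven ℓf rf ?_ ?_ ?_ ?_ ?_ ?_
  · intro i; simp only [hℓf, hrf]; linarith [hapos i]
  · intro i j
    simp only [hℓf, hrf]
    nlinarith [mul_nonneg (by linarith [e1 i j] : (0:ℝ) ≤ d' i j - (a i - a j))
      (by linarith [e1 j i, hd'sym j i] : (0:ℝ) ≤ d' i j + (a i - a j)), e5 i j]
  · intro i j hij
    simp only [hℓf, hrf]
    linarith [e4 i j, e3 i j]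
  · intro i j hA
    have hij : i ≠ j := hA.ne
    rcases (adjE i j hij).mp hA with h | h | h
    · rcases le_total (f i) (f j) with hle | hle
      · right; right; left
        have : d' i j = f j - f i := by rw [hf i j, abs_of_nonpos (by linarith)]; ring
        simp only [hℓf, hrf]; linarith
      · right; right; right
        have : d' i j = f i - f j := by rw [hf i j, abs_of_nonneg (by linarith)]
        simp only [hℓf, hrf]; linarith
    · rcases le_total (f i) (f j) with hle | hle
      · left
        have : d' i j = f j - f i := by rw [hf i j, abs_of_nonpos (by linarith)]; ring
        simp only [hℓf, hrf]; linarith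
      · right; left
        have : d' i j = f i - f j := by rw [hf i j, abs_of_nonneg (by linarith)]
        simp only [hℓf, hrf]; linarith
    · have hs : d' j i = d' i j := hd'sym j i
      rcases le_total (f i) (f j) with hle | hle
      · right; left
        have : d' i j = f j - f i := by rw [hf i j, abs_of_nonpos (by linarith)]; ring
        simp only [hℓf, hrf]; linarith
      · left
        have : d' i j = f i - f j := by rw [hf i j, abs_of_nonneg (by linarith)]
        simp only [hℓf, hrf]; linarith
  · intro i j hij hA
    have hiff := adjE i j hij
    have hnA : ¬ (a i + a j = d' i j ∨ a i + d' i j = a j ∨ a j + d' j i = a i) :=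
      fun h => hA (hiff.mpr h)
    push_neg at hnA
    obtain ⟨c1, c2, c3⟩ := hnA
    have hs : d' j i = d' i j := hd'sym j i
    refine ⟨?_, ?_, ?_, ?_⟩ <;> intro h <;> simp only [hℓf, hrf] at h
    · rcases le_total (f i) (f j) with hle | hle
      · exact c2 (by
          have : d' i j = f j - f i := by rw [hf i j, abs_of_nonpos (by linarith)]; ring
          linarith)
      · exact c3 (by
          have : d' i j = f i - f j := by rw [hf i j, abs_of_nonneg (by linarith)]
          rw [hs]; linarith)
    · rcases le_total (f i) (f j) with hle | hle
      · exact c3 (by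
          have : d' i j = f j - f i := by rw [hf i j, abs_of_nonpos (by linarith)]; ring
          rw [hs]; linarith)
      · exact c2 (by
          have : d' i j = f i - f j := by rw [hf i j, abs_of_nonneg (by linarith)]
          linarith)
    · rcases le_total (f i) (f j) with hle | hle
      · exact c1 (by
          have : d' i j = f j - f i := by rw [hf i j, abs_of_nonpos (by linarith)]; ring
          linarith)
      · -- f j < f i but r i = ℓ j : a i + a j = f j - f i < 0, contradiction
        exact absurd h (by
          have h1 := hapos i; have h2 := hapos j
          intro hh; linarith)
    · rcases le_total (f i) (f j) with hle | hle
      · exact absurd h (by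
          have h1 := hapos i; have h2 := hapos j
          intro hh; linarith)
      · exact c1 (by
          have : d' i j = f i - f j := by rw [hf i j, abs_of_nonneg (by linarith)]
          linarith)
  · intro i j hij
    simp only [hℓf, hrf]
    have := finj i j hij
    intro h
    exact this (by linarith)

lemma part2A {n : ℕ} (U : Set (Option (Fin n))) (hU : none ∉ U) :
    IsMetricHypergraph (inducedEdges (basedOn (SimpleGraph.cycleGraph n)) U) := by
  classical
  set ψ : Option (Fin n) → ℝ := fun o => Option.casesOn o (-1) (fun k => (k.val : ℝ)) with hψ
  have ψinj : ∀ o o' : Option (Fin n), ψ o = ψ o' → o = o' := by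
    intro o o' h
    match o, o' with
    | none, none => rfl
    | none, some k =>
      exfalso
      simp only [hψ] at h
      have : (0:ℝ) ≤ (k.val : ℝ) := Nat.cast_nonneg _
      linarith [h ▸ this]
    | some k, none =>
      exfalso
      simp only [hψ] at h
      have : (0:ℝ) ≤ (k.val : ℝ) := Nat.cast_nonneg _
      linarith [h ▸ this]
    | some k, some k' =>
      simp only [hψ] at h
      have : k.val = k'.val := Nat.cast_injective h
      rw [Fin.ext this]
  refine ⟨fun u v => |ψ u.val - ψ v.val|, ⟨?_, ?_, ?_⟩, ?_⟩
  · intro x y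
    rw [abs_eq_zero, sub_eq_zero]
    constructor
    · intro h; exact Subtype.ext (ψinj _ _ h)
    · intro h; rw [h]
  · intro x y; exact abs_sub_comm _ _
  · intro x y z; exact abs_sub_le _ _ _
  · ext s
    simp only [inducedEdges, Set.mem_setOf_eq]
    constructor
    · rintro (⟨u, v, w, h1, h2, h3, hs⟩ | ⟨u, v, huv, hs⟩)
      · obtain ⟨A, B, C, hsabc, hA, hB, hC⟩ := image_eq_triple Subtype.val_injective hs
        rw [hsabc]
        have dAB : A ≠ B := fun h => h1 (by
          have := congrArg Subtype.val h; rw [hA, hB] at this;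
          exact Option.some_injective _ this)
        have dAC : A ≠ C := fun h => h2 (by
          have := congrArg Subtype.val h; rw [hA, hC] at this;
          exact Option.some_injective _ this)
        have dBC : B ≠ C := fun h => h3 (by
          have := congrArg Subtype.val h; rw [hB, hC] at this;
          exact Option.some_injective _ this)
        exact mem_metricEdges_of_abs (fun x y => abs_sub_comm _ _) rfl rfl rfl dAB dAC dBC
      · exfalso
        have hmem : (none : Option (Fin n)) ∈ Subtype.val '' s := by rw [hs]; simp
        obtain ⟨A, -, hA⟩ := hmem
        exact hU (hA ▸ A.property)
    · rintro ⟨x, y, z, hs, h1, h2, h3, heq⟩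
      rw [hs, image_triple]
      have hx : x.val ≠ none := fun h => hU (h ▸ x.property)
      have hy : y.val ≠ none := fun h => hU (h ▸ y.property)
      have hz : z.val ≠ none := fun h => hU (h ▸ z.property)
      obtain ⟨u, hu⟩ := Option.ne_none_iff_exists'.mp hx
      obtain ⟨v, hv⟩ := Option.ne_none_iff_exists'.mp hy
      obtain ⟨w, hw⟩ := Option.ne_none_iff_exists'.mp hz
      rw [hu, hv, hw]
      left
      refine ⟨u, v, w, ?_, ?_, ?_, rfl⟩
      · intro h; exact h1 (Subtype.ext (by rw [hu, hv, h]))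
      · intro h; exact h2 (Subtype.ext (by rw [hu, hw, h]))
      · intro h; exact h3 (Subtype.ext (by rw [hv, hw, h]))

lemma fin_eq_add_one_iff {n : ℕ} [NeZero n] (h2 : 2 ≤ n) (a b : Fin n) :
    a = b + 1 ↔ (a.val = b.val + 1 ∨ (b.val = n - 1 ∧ a.val = 0)) := by
  have h1 : (1 : Fin n).val = 1 := by
    rw [Fin.val_one']; exact Nat.mod_eq_of_lt (by omega)
  have hb := b.isLt
  have hval : (b + 1).val = (b.val + 1) % n := by rw [Fin.val_add, h1]
  rcases Nat.lt_or_ge (b.val + 1) n with h | h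
  · rw [Fin.ext_iff, hval, Nat.mod_eq_of_lt h]; omega
  · have hbv : b.val + 1 = n := by omega
    rw [Fin.ext_iff, hval, hbv, Nat.mod_self]; omega

lemma habs_eq_one {a b : ℕ} (h : |(a : ℝ) - b| = 1) : a = b + 1 ∨ b = a + 1 := by
  rcases Nat.lt_or_ge a b with hc | hc
  · right
    rw [abs_of_nonpos (by
      have : (a:ℝ) ≤ b := Nat.cast_le.mpr hc.le
      linarith)] at h
    have : (b:ℝ) = a + 1 := by linarith
    exact_mod_cast this
  · left
    rw [abs_of_nonneg (by
      have : (b:ℝ) ≤ a := Nat.cast_le.mpr hc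
      linarith)] at h
    have : (a:ℝ) = b + 1 := by linarith
    exact_mod_cast this

lemma part2B {n : ℕ} (h6 : 6 ≤ n) (U : Set (Option (Fin n))) (i0 : Fin n)
    (hU : (some i0 : Option (Fin n)) ∉ U) :
    IsMetricHypergraph (inducedEdges (basedOn (SimpleGraph.cycleGraph n)) U) := by
  classical
  haveI : NeZero n := ⟨by omega⟩
  set pos : Fin n → ℕ := fun k => (k - i0).val with hposdef
  have posinj : ∀ k k', pos k = pos k' → k = k' := by
    intro k k' h
    have h2 : k - i0 = k' - i0 := Fin.ext h
    exact sub_left_inj.mp h2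
  have posbound : ∀ k, pos k < n := fun k => (k - i0).isLt
  have pos0 : ∀ k, k ≠ i0 → 1 ≤ pos k := by
    intro k hk
    rcases Nat.eq_zero_or_pos (pos k) with h | h
    · exfalso
      apply hk
      have h2 : k - i0 = 0 := Fin.ext (by
        show pos k = (0 : Fin n).val
        rw [h, Fin.val_zero])
      exact sub_eq_zero.mp h2
    · exact h
  set par : Fin n → ℝ := fun k => if pos k % 2 = 0 then 0 else 1 with hpardef
  have par01 : ∀ k, par k = 0 ∨ par k = 1 := by
    intro k; by_cases h : pos k % 2 = 0 <;> simp [hpardef, h]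
  have parbound : ∀ k, 0 ≤ par k ∧ par k ≤ 1 := by
    intro k; rcases par01 k with h | h <;> rw [h] <;> norm_num
  have hpar_succ : ∀ u v, pos u = pos v + 1 →
      (par v = 0 ∧ par u = 1) ∨ (par v = 1 ∧ par u = 0) := by
    intro u v h
    by_cases hv : pos v % 2 = 0
    · left
      constructor
      · simp [hpardef, hv]
      · have : pos u % 2 = 1 := by omega
        simp [hpardef, this]
    · right
      constructor
      · simp [hpardef, hv]
      · have : pos u % 2 = 0 := by omega
        simp [hpardef, this]
  have hadjpos : ∀ u v : Fin n, u ≠ i0 → v ≠ i0 →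
      ((SimpleGraph.cycleGraph n).Adj u v ↔ (pos u = pos v + 1 ∨ pos v = pos u + 1)) := by
    intro u v hu hv
    have key : ∀ a b : Fin n, a ≠ i0 → (a = b + 1 ↔ pos a = pos b + 1) := by
      intro a b ha
      have h2 : a = b + 1 ↔ a - i0 = (b - i0) + 1 := by
        constructor
        · intro h; rw [h]; ring
        · intro h
          calc a = a - i0 + i0 := by ring
          _ = (b - i0 + 1) + i0 := by rw [h]
          _ = b + 1 := by ring
      rw [h2, fin_eq_add_one_iff (by omega)]
      constructor
      · rintro (h | ⟨hh1, hh2⟩)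
        · exact h
        · exfalso
          have := pos0 a ha
          simp only [hposdef] at this
          omega
      · intro h; exact Or.inl h
    rw [adj_char h6]
    constructor
    · rintro (h | h)
      · exact Or.inl ((key u v hu).mp h)
      · exact Or.inr ((key v u hv).mp h)
    · rintro (h | h)
      · exact Or.inl ((key u v hu).mpr h)
      · exact Or.inr ((key v u hv).mpr h)
  have habs1 : ∀ u v : Fin n, u ≠ v → (1:ℝ) ≤ |(pos u : ℝ) - (pos v : ℝ)| := by
    intro u v huv
    have hne : pos u ≠ pos v := fun h => huv (posinj _ _ h)
    rcases Nat.lt_or_ge (pos u) (pos v) with hc | hc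
    · rw [abs_of_nonpos (by
        have : (pos u : ℝ) ≤ pos v := Nat.cast_le.mpr hc.le
        linarith)]
      have : ((pos u + 1 : ℕ) : ℝ) ≤ pos v := Nat.cast_le.mpr hc
      push_cast at this
      linarith
    · have hc2 : pos v < pos u := by omega
      rw [abs_of_nonneg (by
        have : (pos v : ℝ) ≤ pos u := Nat.cast_le.mpr hc2.le
        linarith)]
      have : ((pos v + 1 : ℕ) : ℝ) ≤ pos u := Nat.cast_le.mpr hc2
      push_cast at this
      linarith
  have habs2 : ∀ u v : Fin n, |(pos u : ℝ) - (pos v : ℝ)| ≤ (n:ℝ) - 1 := by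
    intro u v
    have b1 : ((pos u : ℕ) : ℝ) ≤ (n:ℝ) - 1 := by
      have : ((pos u + 1 : ℕ) : ℝ) ≤ (n : ℝ) := Nat.cast_le.mpr (posbound u)
      push_cast at this
      linarith
    have b2 : ((pos v : ℕ) : ℝ) ≤ (n:ℝ) - 1 := by
      have : ((pos v + 1 : ℕ) : ℝ) ≤ (n : ℝ) := Nat.cast_le.mpr (posbound v)
      push_cast at this
      linarith
    have b3 : (0:ℝ) ≤ (pos u : ℝ) := Nat.cast_nonneg _
    have b4 : (0:ℝ) ≤ (pos v : ℝ) := Nat.cast_nonneg _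
    rw [abs_le]
    constructor <;> linarith
  have hn6 : (6:ℝ) ≤ (n:ℝ) := by exact_mod_cast h6
  set F : Option (Fin n) → Option (Fin n) → ℝ := fun o o' =>
    Option.casesOn o (Option.casesOn o' 0 (fun k => (n:ℝ) + par k))
      (fun k => Option.casesOn o' ((n:ℝ) + par k)
        (fun k' => |(pos k : ℝ) - (pos k' : ℝ)|)) with hF
  have Fnn : F none none = 0 := rfl
  have Fns : ∀ k, F none (some k) = (n:ℝ) + par k := fun k => rfl
  have Fsn : ∀ k, F (some k) none = (n:ℝ) + par k := fun k => rfl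
  have Fss : ∀ k k', F (some k) (some k') = |(pos k : ℝ) - (pos k' : ℝ)| := fun k k' => rfl
  have Fpos_none : ∀ k, 0 < F none (some k) := by
    intro k
    rw [Fns]
    linarith [(parbound k).1]
  have F0 : ∀ o o', F o o' = 0 ↔ o = o' := by
    intro o o'
    match o, o' with
    | none, none => simp [Fnn]
    | none, some k =>
      constructor
      · intro h; exact absurd h (ne_of_gt (Fpos_none k))
      · intro h; exact nomatch h
    | some k, none =>
      constructor
      · intro h; rw [Fsn] at h; exfalso; linarith [(parbound k).1]
      · intro h; exact nomatch h
    | some k, some k' =>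
      rw [Fss, abs_eq_zero, sub_eq_zero]
      constructor
      · intro h
        have : pos k = pos k' := Nat.cast_injective h
        rw [posinj _ _ this]
      · intro h
        rw [Option.some_injective _ h]
  have Fsym : ∀ o o', F o o' = F o' o := by
    intro o o'
    match o, o' with
    | none, none => rfl
    | none, some k => rfl
    | some k, none => rfl
    | some k, some k' => rw [Fss, Fss, abs_sub_comm]
  have Ftri : ∀ o1 o2 o3, F o1 o3 ≤ F o1 o2 + F o2 o3 := by
    have parstep : ∀ u v : Fin n, par u - par v ≤ |(pos u : ℝ) - (pos v : ℝ)| := by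
      intro u v
      by_cases huv : u = v
      · rw [huv]; simp
      · linarith [habs1 u v huv, (parbound u).2, (parbound v).1]
    intro o1 o2 o3
    match o1, o2, o3 with
    | none, none, o3 => linarith [Fnn, le_refl (F none o3)]
    | some u, none, none => linarith [Fnn, le_refl (F (some u) none)]
    | none, some v, none => linarith [Fnn, Fns v, Fsn v, (parbound v).1, hn6]
    | none, some v, some w =>
      linarith [Fns v, Fns w, Fss v w, parstep w v,
        abs_sub_comm ((pos v : ℝ)) ((pos w : ℝ))]
    | some u, none, some w =>
      linarith [Fsn u, Fns w, Fss u w, habs2 u w, (parbound u).1, (parbound w).1, hn6]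
    | some u, some v, none =>
      linarith [Fsn u, Fsn v, Fss u v, parstep u v]
    | some u, some v, some w =>
      linarith [Fss u w, Fss u v, Fss v w,
        abs_sub_le ((pos u : ℝ)) ((pos v : ℝ)) ((pos w : ℝ))]
  refine ⟨fun u v : U => F u.val v.val, ⟨?_, ?_, ?_⟩, ?_⟩
  · intro x y
    rw [F0]
    exact ⟨fun h => Subtype.ext h, fun h => h ▸ rfl⟩
  · intro x y; exact Fsym _ _
  · intro x y z; exact Ftri _ _ _
  · ext s
    simp only [inducedEdges, Set.mem_setOf_eq]
    constructor
    · rintro (⟨u, v, w, h1, h2, h3, hs⟩ | ⟨u, v, huv, hs⟩)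
      · obtain ⟨A, B, C, hsabc, hA, hB, hC⟩ := image_eq_triple Subtype.val_injective hs
        rw [hsabc]
        have dAB : A ≠ B := fun h => h1 (by
          have := congrArg Subtype.val h; rw [hA, hB] at this
          exact Option.some_injective _ this)
        have dAC : A ≠ C := fun h => h2 (by
          have := congrArg Subtype.val h; rw [hA, hC] at this
          exact Option.some_injective _ this)
        have dBC : B ≠ C := fun h => h3 (by
          have := congrArg Subtype.val h; rw [hB, hC] at this
          exact Option.some_injective _ this)
        refine mem_metricEdges_of_abs (d := fun u v : U => F u.val v.val)
          (fun x y => Fsym _ _) (pa := (pos u : ℝ)) (pb := (pos v : ℝ)) (pc := (pos w : ℝ))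
          ?_ ?_ ?_ dAB dAC dBC
        · show F A.val B.val = _; rw [hA, hB, Fss]
        · show F A.val C.val = _; rw [hA, hC, Fss]
        · show F B.val C.val = _; rw [hB, hC, Fss]
      · -- none-edge case
        obtain ⟨A, B, C, hsabc, hA, hB, hC⟩ := image_eq_triple Subtype.val_injective hs
        rw [hsabc]
        have hui : u ≠ i0 := fun h => hU (by rw [← h] at hU ⊢; exact hB ▸ B.property)
        have hvi : v ≠ i0 := fun h => hU (by rw [← h] at hU ⊢; exact hC ▸ C.property)
        have dAB : A ≠ B := fun h => by
          have := congrArg Subtype.val h; rw [hA, hB] at this; exact nomatch this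
        have dAC : A ≠ C := fun h => by
          have := congrArg Subtype.val h; rw [hA, hC] at this; exact nomatch this
        have dBC : B ≠ C := fun h => huv.ne (by
          have := congrArg Subtype.val h; rw [hB, hC] at this
          exact Option.some_injective _ this)
        have eAB : F A.val B.val = (n:ℝ) + par u := by rw [hA, hB, Fns]
        have eAC : F A.val C.val = (n:ℝ) + par v := by rw [hA, hC, Fns]
        have eBC : F B.val C.val = |(pos u : ℝ) - (pos v : ℝ)| := by rw [hB, hC, Fss]
        have eperm : ({A, B, C} : Set U) = {A, C, B} := by ext t; simp; tauto
        rcases (hadjpos u v hui hvi).mp huv with hp | hp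
        · -- pos u = pos v + 1
          have hcast : (pos u : ℝ) = (pos v : ℝ) + 1 := by exact_mod_cast congrArg (Nat.cast (R := ℝ)) hp
          rcases hpar_succ u v hp with ⟨hv0, hu1⟩ | ⟨hv1, hu0⟩
          · -- par v = 0, par u = 1 : middle C
            refine ⟨A, C, B, eperm, dAC, dAB, dBC.symm, ?_⟩
            show F A.val C.val + F C.val B.val = F A.val B.val
            rw [eAC, eAB, Fsym C.val B.val, eBC, hv0, hu1, hcast]
            rw [abs_of_nonneg (by linarith)]
            ring
          · -- par v = 1, par u = 0 : middle B
            refine ⟨A, B, C, rfl, dAB, dAC, dBC, ?_⟩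
            show F A.val B.val + F B.val C.val = F A.val C.val
            rw [eAB, eAC, eBC, hv1, hu0, hcast]
            rw [abs_of_nonneg (by linarith)]
            ring
        · -- pos v = pos u + 1
          have hcast : (pos v : ℝ) = (pos u : ℝ) + 1 := by exact_mod_cast congrArg (Nat.cast (R := ℝ)) hp
          rcases hpar_succ v u hp with ⟨hu0, hv1⟩ | ⟨hu1, hv0⟩
          · -- par u = 0, par v = 1 : middle B
            refine ⟨A, B, C, rfl, dAB, dAC, dBC, ?_⟩
            show F A.val B.val + F B.val C.val = F A.val C.val
            rw [eAB, eAC, eBC, hu0, hv1, hcast]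
            rw [abs_of_nonpos (by linarith)]
            ring
          · -- par u = 1, par v = 0 : middle C
            refine ⟨A, C, B, eperm, dAC, dAB, dBC.symm, ?_⟩
            show F A.val C.val + F C.val B.val = F A.val B.val
            rw [eAC, eAB, Fsym C.val B.val, eBC, hu1, hv0, hcast]
            rw [abs_of_nonpos (by linarith)]
            ring
    · rintro ⟨x, y, z, hs, h1, h2, h3, heq⟩
      rw [hs, image_triple]
      have hvalne : ∀ (p q : U), p ≠ q → p.val ≠ q.val :=
        fun p q hpq h => hpq (Subtype.ext h)
      have memU : ∀ (p : U) (k : Fin n), p.val = some k → k ≠ i0 :=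
        fun p k hk h => hU (by rw [← h] at hU ⊢; exact hk ▸ p.property)
      rcases hxv : x.val with _ | u <;> rcases hyv : y.val with _ | v <;>
        rcases hzv : z.val with _ | w
      · exact absurd (Subtype.ext (hxv.trans hyv.symm)) h1
      · exact absurd (Subtype.ext (hxv.trans hyv.symm)) h1
      · exact absurd (Subtype.ext (hxv.trans hzv.symm)) h2
      · -- none, some v, some w : x between? equation: (n+par v) + |pv - pw| = n + par w
        right
        have heq2 : F x.val y.val + F y.val z.val = F x.val z.val := heq
        rw [hxv, hyv, hzv, Fns, Fss, Fns] at heq2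
        have hyzne : v ≠ w := fun h => h3 (Subtype.ext (by rw [hyv, hzv, h]))
        have habs : |(pos v : ℝ) - (pos w : ℝ)| = 1 := by
          have hge := habs1 v w hyzne
          have hb1 := (parbound v).1; have hb2 := (parbound v).2
          have hb3 := (parbound w).1; have hb4 := (parbound w).2
          linarith
        have hd := habs_eq_one habs
        refine ⟨v, w, ?_, rfl⟩
        exact (hadjpos v w (memU y v hyv) (memU z w hzv)).mpr hd
      · exact absurd (Subtype.ext (hyv.trans hzv.symm)) h3
      · -- some u, none, some w : impossible
        exfalso
        have heq2 : F x.val y.val + F y.val z.val = F x.val z.val := heq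
        rw [hxv, hyv, hzv, Fsn, Fns, Fss] at heq2
        have := habs2 u w
        linarith [(parbound u).1, (parbound w).1]
      · -- some u, some v, none : edge (u,v)
        have heq2 : F x.val y.val + F y.val z.val = F x.val z.val := heq
        rw [hxv, hyv, hzv, Fss, Fsn, Fsn] at heq2
        have hxyne : u ≠ v := fun h => h1 (Subtype.ext (by rw [hxv, hyv, h]))
        have habs : |(pos u : ℝ) - (pos v : ℝ)| = 1 := by
          have hge := habs1 u v hxyne
          have hb1 := (parbound u).1; have hb2 := (parbound u).2
          have hb3 := (parbound v).1; have hb4 := (parbound v).2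
          linarith
        have hd := habs_eq_one habs
        have hAdj := (hadjpos u v (memU x u hxv) (memU y v hyv)).mpr hd
        right
        refine ⟨u, v, hAdj, ?_⟩
        ext t; simp; tauto
      · -- all some : complete triple
        left
        refine ⟨u, v, w, ?_, ?_, ?_, rfl⟩
        · exact fun h => h1 (Subtype.ext (by rw [hxv, hyv, h]))
        · exact fun h => h2 (Subtype.ext (by rw [hxv, hzv, h]))
        · exact fun h => h3 (Subtype.ext (by rw [hyv, hzv, h]))

/-- For every even integer `n > 4`, the hypergraph based on the cycle `C_n`
is minimal non-metric. -/
theorem stmt_0 (n : ℕ) (hn : Even n) (h4 : 4 < n) :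
    ¬ IsMetricHypergraph (basedOn (SimpleGraph.cycleGraph n)) ∧
    ∀ U : Set (Option (Fin n)), U ≠ Set.univ →
      IsMetricHypergraph (inducedEdges (basedOn (SimpleGraph.cycleGraph n)) U) := by
  obtain ⟨m, hm⟩ := hn
  have h6 : 6 ≤ n := by omega
  have h2 : 2 ∣ n := ⟨m, by omega⟩
  constructor
  · exact part1 h6 h2
  · intro U hU
    obtain ⟨x0, hx0⟩ := (Set.ne_univ_iff_exists_notMem U).mp hU
    rcases x0 with _ | i0
    · exact part2A U hx0
    · exact part2B h6 U i0 hx0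
end

section
/- For every even integer n greater than four, the 3-uniform hypergraph based on the cycle C_n is not metric. -/
universe u

open Fin.NatCast Fin.CommRing

section basic
variable {α : Type*} {d : α → α → ℝ} (hd : IsMetric d)
include hd

theorem d_nonneg (x y : α) : 0 ≤ d x y := by
  have h := hd.triangle x y x
  have := (hd.eq_iff x x).mpr rfl
  have := hd.symm x y
  linarith

theorem d_pos {x y : α} (h : x ≠ y) : 0 < d x y := by
  rcases lt_or_eq_of_le (d_nonneg hd x y) with h' | h'
  · exact h'
  · exact absurd ((hd.eq_iff x y).mp h'.symm) h

/-- `y` is between `x` and `z`. -/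
def Col (d : α → α → ℝ) (x y z : α) : Prop := d x y + d y z = d x z

def Col3 (d : α → α → ℝ) (x y z : α) : Prop :=
  Col d x y z ∨ Col d y z x ∨ Col d z x y

theorem col_rev {x y z : α} (h : Col d x y z) : Col d z y x := by
  unfold Col at *
  rw [hd.symm z y, hd.symm y x, hd.symm z x]
  linarith

omit hd in
theorem col3_rot {x y z : α} (h : Col3 d x y z) : Col3 d y z x := by
  rcases h with h | h | h
  · exact Or.inr (Or.inr h)
  · exact Or.inl h
  · exact Or.inr (Or.inl h)

theorem col3_rev {x y z : α} (h : Col3 d x y z) : Col3 d z y x := by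
  rcases h with h | h | h
  · exact Or.inl (col_rev hd h)
  · exact Or.inr (Or.inr (col_rev hd h))
  · exact Or.inr (Or.inl (col_rev hd h))

theorem col3_swap12 {x y z : α} (h : Col3 d x y z) : Col3 d y x z :=
  col3_rot (col3_rev hd h)

theorem mem_metricEdges_iff_s1 {a b c : α} (hab : a ≠ b) (hac : a ≠ c) (hbc : b ≠ c) :
    ({a, b, c} : Set α) ∈ metricEdges d ↔ Col3 d a b c := by
  constructor
  · rintro ⟨u, v, w, hset, huv, huw, hvw, heq⟩
    have hcol : Col3 d u v w := Or.inl heq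
    have hmem : ∀ t : α, t ∈ ({a,b,c} : Set α) ↔ t ∈ ({u,v,w} : Set α) := fun t => by rw [hset]
    have ha := (hmem a).mp (by simp)
    have hb := (hmem b).mp (by simp)
    have hc := (hmem c).mp (by simp)
    simp only [Set.mem_insert_iff, Set.mem_singleton_iff] at ha hb hc
    rcases ha with rfl | rfl | rfl <;> rcases hb with rfl | rfl | rfl <;>
      rcases hc with rfl | rfl | rfl <;> first
      | exact absurd rfl hab | exact absurd rfl hac | exact absurd rfl hbc
      | exact absurd rfl huv | exact absurd rfl huw | exact absurd rfl hvw
      | exact hcol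
      | exact col3_rot hcol
      | exact col3_rot (col3_rot hcol)
      | exact col3_swap12 hd hcol
      | exact col3_rot (col3_swap12 hd hcol)
      | exact col3_rot (col3_rot (col3_swap12 hd hcol))
  · intro h
    rcases h with h | h | h
    · exact ⟨a, b, c, rfl, hab, hac, hbc, h⟩
    · refine ⟨b, c, a, ?_, hbc, hab.symm, hac.symm, h⟩
      ext t; simp; tauto
    · refine ⟨c, a, b, ?_, hac.symm, hbc.symm, hab, h⟩
      ext t; simp; tauto

end basic

section embed
variable {β : Type*} [Fintype β] {d : β → β → ℝ} (hd : IsMetric d)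
include hd

theorem embed_line (hcard : 5 ≤ Fintype.card β)
    (hcol : ∀ a b c : β, a ≠ b → a ≠ c → b ≠ c → Col3 d a b c) :
    ∃ p : β → ℝ, ∀ i j, d i j = |p i - p j| := by
  classical
  have hne : Nonempty (β × β) := by
    have : Nonempty β := Fintype.card_pos_iff.mp (by omega)
    exact ⟨this.some, this.some⟩
  obtain ⟨⟨p, q⟩, hmax'⟩ := Finite.exists_max (fun z : β × β => d z.1 z.2)
  set D := d p q with hD
  have hmax : ∀ x y : β, d x y ≤ D := fun x y => hmax' (x, y)
  have hpq : p ≠ q := by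
    intro h
    obtain ⟨x, y, hxy⟩ := Fintype.exists_pair_of_one_lt_card (α := β) (by omega)
    have h1 := d_pos hd hxy
    have h2 := hmax x y
    have h3 : d p q = 0 := (hd.eq_iff p q).mpr h
    linarith
  have hDpos : 0 < D := d_pos hd hpq
  have hbtw : ∀ u : β, d p u + d u q = D := by
    intro u
    by_cases hup : u = p
    · rw [hup, (hd.eq_iff p p).mpr rfl, hD]; ring
    by_cases huq : u = q
    · rw [huq, (hd.eq_iff q q).mpr rfl, hD]; ring
    rcases hcol p u q (Ne.symm hup) hpq huq with h | h | h
    · exact h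
    · -- Col u q p : d u q + d q p = d u p
      unfold Col at h
      rw [hd.symm q p, ← hD] at h
      have h1 := hmax u p
      have h2 := d_pos hd huq
      exfalso; linarith
    · -- Col q p u : d q p + d p u = d q u
      unfold Col at h
      rw [hd.symm q p, ← hD] at h
      have h1 := hmax q u
      have h2 := d_pos hd (Ne.symm hup)
      exfalso; linarith
  refine ⟨fun u => d p u, ?_⟩
  intro r s
  simp only []
  by_cases hrs : r = s
  · rw [hrs, (hd.eq_iff s s).mpr rfl]; simp
  by_cases hrp : r = p
  · rw [hrp, (hd.eq_iff p p).mpr rfl]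
    rw [abs_of_nonpos (by linarith [d_nonneg hd p s]), hd.symm p s]; ring
  by_cases hsp : s = p
  · rw [hsp, (hd.eq_iff p p).mpr rfl]
    rw [abs_of_nonneg (by linarith [d_nonneg hd p r]), hd.symm r p]; ring
  by_cases hrq : r = q
  · rw [hrq, hd.symm q s, ← hD]
    rw [abs_of_nonneg (by linarith [hbtw s, d_nonneg hd s q])]
    linarith [hbtw s]
  by_cases hsq : s = q
  · rw [hsq, ← hD]
    rw [abs_of_nonpos (by linarith [hbtw r, d_nonneg hd r q])]
    linarith [hbtw r]
  have hbr := hbtw r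
  have hbs := hbtw s
  have h1 := hcol p r s (Ne.symm hrp) (Ne.symm hsp) hrs
  have h2 := hcol q r s (Ne.symm hrq) (Ne.symm hsq) hrs
  rcases h1 with h1 | h1 | h1
  · -- Col p r s : d p r + d r s = d p s ⇒ d r s = d p s - d p r
    unfold Col at h1
    rw [abs_of_nonpos (by linarith [d_nonneg hd r s])]
    linarith
  · -- Col r s p : d r s + d s p = d r p ⇒ d r s = d p r - d p s
    unfold Col at h1
    rw [hd.symm s p, hd.symm r p] at h1
    rw [abs_of_nonneg (by linarith [d_nonneg hd r s])]
    linarith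
  -- h1 : Col s p r : d s p + d p r = d s r  (bad for p)
  unfold Col at h1
  rw [hd.symm s p, hd.symm s r] at h1
  -- now h1 : d p s + d p r = d r s
  rcases h2 with h2 | h2 | h2
  · -- Col q r s : d q r + d r s = d q s ⇒ d r s = d q s - d q r = d p r - d p s
    unfold Col at h2
    rw [hd.symm q r, hd.symm q s] at h2
    rw [abs_of_nonneg (by linarith [d_nonneg hd r s])]
    linarith
  · -- Col r s q : d r s + d s q = d r q ⇒ d r s = d q r - d q s = d p s - d p r
    unfold Col at h2
    rw [abs_of_nonpos (by linarith [d_nonneg hd r s])]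
    linarith
  -- h2 : Col s q r : d s q + d q r = d s r  (bad for q)
  unfold Col at h2
  rw [hd.symm s r] at h2
  -- now: d r s = d p r + d p s and d r s = d s q + d q r = 2D - d p r - d p s
  exfalso
  have hrsD : d r s = D := by linarith [hd.symm q r]
  have hsum : d p r + d p s = D := by linarith
  -- find a fifth point
  obtain ⟨t, ht⟩ : ∃ t : β, t ∉ ({p, q, r, s} : Finset β) := by
    by_contra hcon
    push_neg at hcon
    have hsub : (Finset.univ : Finset β) ⊆ {p, q, r, s} := fun x _ => hcon x
    have hle := Finset.card_le_card hsub
    have h4 : ({p, q, r, s} : Finset β).card ≤ 4 := by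
      apply (Finset.card_insert_le _ _).trans
      have : ({q, r, s} : Finset β).card ≤ 3 := by
        apply (Finset.card_insert_le _ _).trans
        have : ({r, s} : Finset β).card ≤ 2 := by
          apply (Finset.card_insert_le _ _).trans
          simp
        omega
      omega
    rw [Finset.card_univ] at hle
    omega
  simp only [Finset.mem_insert, Finset.mem_singleton, not_or] at ht
  obtain ⟨htp, htq, htr, hts⟩ := ht
  -- t is between r and s as well
  have hbtw' : d r t + d t s = D := by
    rcases hcol r t s (Ne.symm htr) hrs hts with h | h | h
    · unfold Col at h; rw [hrsD] at h; exact h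
    · -- Col t s r : d t s + d s r = d t r
      unfold Col at h
      rw [hd.symm s r, hrsD] at h
      have := hmax t r
      have := d_pos hd hts
      exfalso; linarith
    · -- Col s r t : d s r + d r t = d s t
      unfold Col at h
      rw [hd.symm s r, hrsD] at h
      have := hmax s t
      have := d_pos hd (Ne.symm htr)
      exfalso; linarith
  have hbt := hbtw t
  -- bounds
  have hα0 : 0 < d p t := d_pos hd (Ne.symm htp)
  have hαD : d p t < D := by
    have := d_pos hd htq; linarith [hbt, hd.symm t q]
  have hβ0 : 0 < d r t := d_pos hd (Ne.symm htr)
  have hβD : d r t < D := by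
    have := d_pos hd hts; linarith [hbtw', hd.symm t s]
  have hc0 : 0 < d p r := d_pos hd (Ne.symm hrp)
  have hcD : d p r < D := by
    have := d_pos hd hrq; linarith [hbr, hd.symm r q]
  -- the four triples
  have t1 := hcol p r t (Ne.symm hrp) (Ne.symm htp) (Ne.symm htr)
  have t2 := hcol q s t (Ne.symm hsq) (Ne.symm htq) (Ne.symm hts)
  have t3 := hcol p s t (Ne.symm hsp) (Ne.symm htp) (Ne.symm hts)
  have t4 := hcol q r t (Ne.symm hrq) (Ne.symm htq) (Ne.symm htr)
  unfold Col3 Col at t1 t2 t3 t4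
  rcases t1 with t1 | t1 | t1 <;> rcases t2 with t2 | t2 | t2 <;>
    rcases t3 with t3 | t3 | t3 <;> rcases t4 with t4 | t4 | t4 <;>
    linarith [hd.symm p r, hd.symm p s, hd.symm p t, hd.symm q r, hd.symm q s, hd.symm q t,
      hd.symm r s, hd.symm r t, hd.symm s t, hbt, hbr, hbs, hbtw', hsum, hrsD,
      hd.symm p q, hmax p t, hmax r t]

end embed

theorem parity_walk (n : ℕ) [NeZero n] (hn : Even n) (hn1 : 1 < n) (P : Fin n → Prop) (i0 : Fin n)
    (h0 : P (i0 + 1) ↔ P i0)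
    (hs : ∀ i, i ≠ i0 → (P (i + 1) ↔ ¬ P i)) : False := by
  have key : ∀ k : ℕ, k < n → (P (i0 + 1 + (k : Fin n)) ↔ (P (i0 + 1) ↔ Even k)) := by
    intro k
    induction k with
    | zero => intro _; simp
    | succ k ih =>
      intro hk
      have ihk := ih (by omega)
      have hcast : ((k + 1 : ℕ) : Fin n) = (k : Fin n) + 1 := by push_cast; ring
      have hne : i0 + 1 + (k : Fin n) ≠ i0 := by
        intro h
        have hz : ((k + 1 : ℕ) : Fin n) = 0 := by rw [hcast]; linear_combination h
        rw [Fin.natCast_eq_zero] at hz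
        exact absurd (Nat.le_of_dvd (by omega) hz) (by omega)
      have hrec := hs _ hne
      rw [hcast, ← add_assoc, hrec, ihk, Nat.even_add_one]
      tauto
  have hlast := key (n - 1) (by omega)
  have hn0 : ((n : ℕ) : Fin n) = 0 := Fin.natCast_eq_zero.mpr (dvd_refl n)
  have h1 : ((n - 1 + 1 : ℕ) : Fin n) = 0 := by
    rw [show n - 1 + 1 = n from by omega]
    exact hn0
  have h2 : ((n - 1 : ℕ) : Fin n) + 1 = 0 := by
    rw [← h1]
    push_cast
    ring
  have hcast2 : i0 + 1 + ((n - 1 : ℕ) : Fin n) = i0 := by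
    linear_combination h2
  rw [hcast2] at hlast
  have hodd : ¬ Even (n - 1) := by
    rw [Nat.even_iff] at *
    omega
  tauto


set_option maxHeartbeats 2000000 in
theorem endgame (n : ℕ) (hn : Even n) (hn4 : 4 < n) (l r : Fin n → ℝ)
    (hlr : ∀ i, l i < r i)
    (hmid : ∀ i j : Fin n, i ≠ j → l i + r i ≠ l j + r j)
    (hord : ∀ i j : Fin n, l i + r i < l j + r j → l i ≤ l j ∧ r i ≤ r j ∧ l j ≤ r i)
    (hadj : ∀ i j : Fin n, i ≠ j →
      ((SimpleGraph.cycleGraph n).Adj i j ↔ (l i = l j ∨ r i = r j ∨ r i = l j ∨ l i = r j))) :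
    False := by
  classical
  haveI : NeZero n := ⟨by omega⟩
  -- small numerals are nonzero in Fin n
  have base : ∀ k : ℕ, 0 < k → k < n → ((k : ℕ) : Fin n) ≠ 0 := by
    intro k hk1 hk2 h
    rw [Fin.natCast_eq_zero] at h
    exact absurd (Nat.le_of_dvd hk1 h) (by omega)
  have k1 : (1 : Fin n) ≠ 0 := by simpa using base 1 (by omega) (by omega)
  have k2 : (1 + 1 : Fin n) ≠ 0 := by
    have := base 2 (by omega) (by omega)
    simpa [one_add_one_eq_two] using this
  have k3 : (1 + 1 + 1 : Fin n) ≠ 0 := by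
    have := base 3 (by omega) (by omega)
    have e : ((3 : ℕ) : Fin n) = 1 + 1 + 1 := by push_cast; ring
    rw [e] at this; exact this
  -- adjacency characterization
  have hADJ : ∀ u v : Fin n, (SimpleGraph.cycleGraph n).Adj u v ↔ (u = v + 1 ∨ v = u + 1) := by
    intro u v
    rw [SimpleGraph.cycleGraph_adj']
    have hv1 : (1 : Fin n).val = 1 := by
      rw [Fin.val_one']; exact Nat.mod_eq_of_lt (by omega)
    constructor
    · rintro (h | h)
      · left
        have : u - v = 1 := Fin.ext (by rw [h, hv1])
        rw [sub_eq_iff_eq_add] at this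
        rw [this]; ring
      · right
        have : v - u = 1 := Fin.ext (by rw [h, hv1])
        rw [sub_eq_iff_eq_add] at this
        rw [this]; ring
    · rintro (h | h)
      · left; rw [h]; simpa using hv1
      · right; rw [h]; simpa using hv1
  have hAdjSucc : ∀ i : Fin n, (SimpleGraph.cycleGraph n).Adj (i + 1) i := by
    intro i; rw [hADJ]; left; rfl
  -- triangle-free
  have hTRI : ∀ a b c : Fin n, (SimpleGraph.cycleGraph n).Adj a b →
      (SimpleGraph.cycleGraph n).Adj b c → (SimpleGraph.cycleGraph n).Adj a c → False := by
    intro a b c hab hbc hac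
    rw [hADJ] at hab hbc hac
    rcases hab with h1 | h1 <;> rcases hbc with h2 | h2 <;> rcases hac with h3 | h3
    · exact k1 (by linear_combination h3 - h1 - h2)
    · exact k3 (by linear_combination -h1 - h2 - h3)
    · exact k1 (by linear_combination h1 - h2 - h3)
    · exact k1 (by linear_combination h2 - h1 - h3)
    · exact k1 (by linear_combination h2 - h1 - h3)
    · exact k1 (by linear_combination h1 - h2 - h3)
    · exact k3 (by linear_combination -h1 - h2 - h3)
    · exact k1 (by linear_combination h3 - h1 - h2)

  -- shared endpoint implies adjacent
  have hshare : ∀ (i k : Fin n) (v : ℝ), i ≠ k → (l i = v ∨ r i = v) → (l k = v ∨ r k = v) →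
      (SimpleGraph.cycleGraph n).Adj i k := by
    intro i k v hik hi hk
    rw [hadj i k hik]
    rcases hi with hi | hi <;> rcases hk with hk | hk
    · exact Or.inl (hi.trans hk.symm)
    · exact Or.inr (Or.inr (Or.inr (hi.trans hk.symm)))
    · exact Or.inr (Or.inr (Or.inl (hi.trans hk.symm)))
    · exact Or.inr (Or.inl (hi.trans hk.symm))
  have htric : ∀ i j : Fin n, i ≠ j → l i + r i < l j + r j ∨ l j + r j < l i + r i :=
    fun i j h => lt_or_gt_of_ne (hmid i j h)
  have hne1 : ∀ i : Fin n, i ≠ i + 1 := fun i h => k1 (by linear_combination -h)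
  have hne2 : ∀ i : Fin n, i ≠ i + 1 + 1 := fun i h => k2 (by linear_combination -h)
  have hAdj1 : ∀ i : Fin n, (SimpleGraph.cycleGraph n).Adj i (i + 1) :=
    fun i => (hAdjSucc i).symm
  -- exactly one of the four equalities for an adjacent pair
  have hfourE : ∀ i j : Fin n, i ≠ j → (SimpleGraph.cycleGraph n).Adj i j →
      (l i = l j ∧ ¬r i = r j ∧ ¬r i = l j ∧ ¬l i = r j) ∨
      (¬l i = l j ∧ r i = r j ∧ ¬r i = l j ∧ ¬l i = r j) ∨
      (¬l i = l j ∧ ¬r i = r j ∧ r i = l j ∧ ¬l i = r j) ∨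
      (¬l i = l j ∧ ¬r i = r j ∧ ¬r i = l j ∧ l i = r j) := by
    intro i j hij ha
    have h4 := (hadj i j hij).mp ha
    have hm := hmid i j hij
    have h1 := hlr i
    have h2 := hlr j
    rcases h4 with h | h | h | h
    · exact Or.inl ⟨h, fun e => hm (by rw [h, e]), fun e => by linarith,
        fun e => by linarith⟩
    · exact Or.inr (Or.inl ⟨fun e => hm (by rw [e, h]), h, fun e => by linarith,
        fun e => by linarith⟩)
    · exact Or.inr (Or.inr (Or.inl ⟨fun e => by linarith, fun e => by linarith, h,
        fun e => by linarith⟩))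
    · exact Or.inr (Or.inr (Or.inr ⟨fun e => by linarith, fun e => by linarith,
        fun e => by linarith, h⟩))
  have hfour := fun i : Fin n => hfourE i (i + 1) (hne1 i) (hAdj1 i)
  -- the vertex recurrence
  have hPQ : ∀ i : Fin n,
      ((r (i + 1) = r (i + 1 + 1) ∨ r (i + 1) = l (i + 1 + 1)) ↔
        ¬(r i = r (i + 1) ∨ l i = r (i + 1))) := by
    intro i
    constructor
    · intro hp hq
      have hadj02 : (SimpleGraph.cycleGraph n).Adj i (i + 1 + 1) := by
        refine hshare i (i + 1 + 1) (r (i + 1)) (hne2 i) ?_ ?_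
        · exact hq.symm
        · rcases hp with h | h
          · exact Or.inr h.symm
          · exact Or.inl h.symm
      exact hTRI i (i + 1) (i + 1 + 1) (hAdj1 i) (hAdj1 (i + 1)) hadj02
    · intro hnq
      by_contra hnp
      have hadj02 : (SimpleGraph.cycleGraph n).Adj i (i + 1 + 1) := by
        refine hshare i (i + 1 + 1) (l (i + 1)) (hne2 i) ?_ ?_
        · rcases hfour i with ⟨h, _, _, _⟩ | ⟨_, h, _, _⟩ | ⟨_, _, h, _⟩ | ⟨_, _, _, h⟩
          · exact Or.inl h
          · exact absurd (Or.inl h) hnq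
          · exact Or.inr h
          · exact absurd (Or.inr h) hnq
        · rcases hfour (i + 1) with ⟨h, _, _, _⟩ | ⟨_, h, _, _⟩ | ⟨_, _, h, _⟩ | ⟨_, _, _, h⟩
          · exact Or.inl h.symm
          · exact absurd (Or.inl h) hnp
          · exact absurd (Or.inr h) hnp
          · exact Or.inr h.symm
      exact hTRI i (i + 1) (i + 1 + 1) (hAdj1 i) (hAdj1 (i + 1)) hadj02
  -- the combined recurrence
  have hR : ∀ i : Fin n,
      ((r (i + 1) = r (i + 1 + 1) ∨ r (i + 1) = l (i + 1 + 1)) ↔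
        ((r i = r (i + 1) ∨ r i = l (i + 1)) ↔ (r i = l (i + 1) ∨ l i = r (i + 1)))) := by
    intro i
    have hpq := hPQ i
    rcases hfour i with ⟨h, h2, h3, h4⟩ | ⟨h, h2, h3, h4⟩ | ⟨h, h2, h3, h4⟩ | ⟨h, h2, h3, h4⟩ <;>
      · rw [hpq]
        constructor
        · intro hx
          constructor <;> intro hy <;> tauto
        · intro hx
          tauto
  -- touching edges give global min and max
  have htouch : ∀ i j : Fin n, i ≠ j → (SimpleGraph.cycleGraph n).Adj i j → r i = l j →
      (∀ k, k ≠ i → l i + r i < l k + r k) ∧ (∀ k, k ≠ j → l k + r k < l j + r j) := by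
    intro i j hij ha hrl
    have hij' : l i + r i < l j + r j := by
      have := hlr i; have := hlr j; linarith
    constructor
    · intro k hki
      by_cases hkj : k = j
      · rw [hkj]; exact hij'
      rcases htric i k (Ne.symm hki) with h | h
      · exact h
      · exfalso
        obtain ⟨_, hrki, _⟩ := hord k i h
        obtain ⟨_, _, hljk⟩ := hord k j (by linarith)
        have e1 : r k = r i := by linarith
        have e2 : r k = l j := by linarith
        exact hTRI k i j (hshare k i (r i) hki (Or.inr e1) (Or.inr rfl)) ha
          (hshare k j (l j) hkj (Or.inr e2) (Or.inl rfl))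
    · intro k hkj
      by_cases hki : k = i
      · rw [hki]; exact hij'
      rcases htric k j hkj with h | h
      · exact h
      · exfalso
        obtain ⟨hljk', _, _⟩ := hord j k h
        obtain ⟨_, _, hlkr⟩ := hord i k (by linarith)
        have e1 : l k = l j := by linarith
        have e2 : l k = r i := by linarith
        exact hTRI k i j (hshare k i (r i) hki (Or.inl e2) (Or.inr rfl)) ha
          (hshare k j (l j) hkj (Or.inl e1) (Or.inl rfl))
  by_cases hT : ∃ i0 : Fin n, (r i0 = l (i0 + 1) ∨ l i0 = r (i0 + 1))
  · -- there is a touching edge; it is unique, and parity gives a contradiction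
    obtain ⟨i0, hT0⟩ := hT
    -- min/max data for a touching edge
    have hdata : ∀ i : Fin n, (r i = l (i + 1) ∨ l i = r (i + 1)) →
        ∃ mi ma : Fin n, (mi = i ∧ ma = i + 1 ∨ mi = i + 1 ∧ ma = i) ∧
          (∀ k, k ≠ mi → l mi + r mi < l k + r k) ∧
          (∀ k, k ≠ ma → l k + r k < l ma + r ma) := by
      intro i hi
      rcases hi with h | h
      · obtain ⟨h1, h2⟩ := htouch i (i + 1) (hne1 i) (hAdj1 i) h
        exact ⟨i, i + 1, Or.inl ⟨rfl, rfl⟩, h1, h2⟩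
      · obtain ⟨h1, h2⟩ := htouch (i + 1) i (Ne.symm (hne1 i)) (hAdjSucc i) h.symm
        exact ⟨i + 1, i, Or.inr ⟨rfl, rfl⟩, h1, h2⟩
    have hminuniq : ∀ m1 m2 : Fin n, (∀ k, k ≠ m1 → l m1 + r m1 < l k + r k) →
        (∀ k, k ≠ m2 → l m2 + r m2 < l k + r k) → m1 = m2 := by
      intro m1 m2 h1 h2
      by_contra hne
      have := h1 m2 (Ne.symm hne)
      have := h2 m1 hne
      linarith
    have huniq : ∀ i : Fin n, (r i = l (i + 1) ∨ l i = r (i + 1)) → i = i0 := by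
      intro i hi
      obtain ⟨mi, ma, hca, hmi, hma⟩ := hdata i hi
      obtain ⟨mi0, ma0, hca0, hmi0, hma0⟩ := hdata i0 hT0
      have hmm := hminuniq mi mi0 hmi hmi0
      have hMM : ma = ma0 := by
        by_contra hne
        have := hma ma0 (Ne.symm hne)
        have := hma0 ma hne
        linarith
      rcases hca with ⟨e1, e2⟩ | ⟨e1, e2⟩ <;> rcases hca0 with ⟨f1, f2⟩ | ⟨f1, f2⟩
      · rw [← e1, ← f1, hmm]
      · exfalso
        rw [f1] at hmm
        rw [f2] at hMM
        rw [e1] at hmm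
        rw [e2] at hMM
        rw [hmm] at hMM
        exact k2 (by linear_combination hMM)
      · exfalso
        rw [f1] at hmm
        rw [f2] at hMM
        rw [e1] at hmm
        rw [e2] at hMM
        rw [hMM] at hmm
        exact k2 (by linear_combination hmm)
      · have : i + 1 = i0 + 1 := by rw [← e1, ← f1, hmm]
        exact add_right_cancel this
    have hprem1 : (r (i0 + 1) = r (i0 + 1 + 1) ∨ r (i0 + 1) = l (i0 + 1 + 1)) ↔
        (r i0 = r (i0 + 1) ∨ r i0 = l (i0 + 1)) := by
      rw [hR i0]
      exact ⟨fun h => h.mpr hT0, fun h => ⟨fun _ => hT0, fun _ => h⟩⟩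
    have hprem2 : ∀ i : Fin n, i ≠ i0 →
        ((r (i + 1) = r (i + 1 + 1) ∨ r (i + 1) = l (i + 1 + 1)) ↔
          ¬(r i = r (i + 1) ∨ r i = l (i + 1))) := by
      intro i hi
      have hnT : ¬(r i = l (i + 1) ∨ l i = r (i + 1)) := fun h => hi (huniq i h)
      rw [hR i]
      exact ⟨fun h hp => hnT (h.mp hp), fun h => ⟨fun hp => absurd hp h, fun ht => absurd ht hnT⟩⟩
    exact parity_walk n hn (by omega) (fun i => (r i = r (i + 1) ∨ r i = l (i + 1))) i0 hprem1 hprem2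
  · -- no touching edge: the minimum vertex has two incomparable successors
    have hT' : ∀ i : Fin n, ¬(r i = l (i + 1) ∨ l i = r (i + 1)) := fun i h => hT ⟨i, h⟩
    haveI : Nonempty (Fin n) := ⟨⟨0, by omega⟩⟩
    obtain ⟨m, hm⟩ := Finite.exists_min (fun i : Fin n => l i + r i)
    have hmstrict : ∀ k, k ≠ m → l m + r m < l k + r k := by
      intro k hk
      rcases htric m k (Ne.symm hk) with h | h
      · exact h
      · exact absurd (hm k) (not_le.mpr (by linarith))
    -- every edge joins consecutive vertices in the midpoint order
    have hconsec : ∀ i k : Fin n, k ≠ i → k ≠ i + 1 →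
        ¬(l i + r i < l k + r k ∧ l k + r k < l (i + 1) + r (i + 1)) ∧
        ¬(l (i + 1) + r (i + 1) < l k + r k ∧ l k + r k < l i + r i) := by
      intro i k hki hki1
      have hLR : l i = l (i + 1) ∨ r i = r (i + 1) := by
        rcases hfour i with ⟨h, _, _, _⟩ | ⟨_, h, _, _⟩ | ⟨_, _, h, _⟩ | ⟨_, _, _, h⟩
        · exact Or.inl h
        · exact Or.inr h
        · exact absurd (Or.inl h) (hT' i)
        · exact absurd (Or.inr h) (hT' i)
      constructor <;> rintro ⟨ha, hb⟩
      · rcases hLR with h | h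
        · obtain ⟨e1, _, _⟩ := hord i k ha
          obtain ⟨e2, _, _⟩ := hord k (i + 1) hb
          have f1 : l k = l i := by linarith
          have f2 : l k = l (i + 1) := by linarith
          exact hTRI k i (i + 1) (hshare k i (l i) hki (Or.inl f1) (Or.inl rfl))
            (hAdj1 i) (hshare k (i + 1) (l (i + 1)) hki1 (Or.inl f2) (Or.inl rfl))
        · obtain ⟨_, e1, _⟩ := hord i k ha
          obtain ⟨_, e2, _⟩ := hord k (i + 1) hb
          have f1 : r k = r i := by linarith
          have f2 : r k = r (i + 1) := by linarith
          exact hTRI k i (i + 1) (hshare k i (r i) hki (Or.inr f1) (Or.inr rfl))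
            (hAdj1 i) (hshare k (i + 1) (r (i + 1)) hki1 (Or.inr f2) (Or.inr rfl))
      · rcases hLR with h | h
        · obtain ⟨e1, _, _⟩ := hord (i + 1) k ha
          obtain ⟨e2, _, _⟩ := hord k i hb
          have f1 : l k = l i := by linarith
          have f2 : l k = l (i + 1) := by linarith
          exact hTRI k i (i + 1) (hshare k i (l i) hki (Or.inl f1) (Or.inl rfl))
            (hAdj1 i) (hshare k (i + 1) (l (i + 1)) hki1 (Or.inl f2) (Or.inl rfl))
        · obtain ⟨_, e1, _⟩ := hord (i + 1) k ha
          obtain ⟨_, e2, _⟩ := hord k i hb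
          have f1 : r k = r i := by linarith
          have f2 : r k = r (i + 1) := by linarith
          exact hTRI k i (i + 1) (hshare k i (r i) hki (Or.inr f1) (Or.inr rfl))
            (hAdj1 i) (hshare k (i + 1) (r (i + 1)) hki1 (Or.inr f2) (Or.inr rfl))
    have hu : m + 1 ≠ m := Ne.symm (hne1 m)
    have hv : m - 1 ≠ m := by
      intro h
      exact k1 (by linear_combination -h)
    have huv : m + 1 ≠ m - 1 := by
      intro h
      exact k2 (by linear_combination h)
    have hmu := hmstrict (m + 1) hu
    have hmv := hmstrict (m - 1) hv
    have hsub : m - 1 + 1 = m := by ring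
    rcases htric (m + 1) (m - 1) huv with h | h
    · -- m+1 strictly between m and m-1 : contradicts edge (m-1, m)
      have := (hconsec (m - 1) (m + 1) huv (by rw [hsub]; exact hu)).2
      rw [hsub] at this
      exact this ⟨hmu, h⟩
    · have := (hconsec m (m - 1) hv (Ne.symm huv)).1
      exact this ⟨hmv, h⟩


set_option maxHeartbeats 1000000 in
/-- For every even integer `n > 4`, the hypergraph based on the cycle `C_n`
is not metric. -/
theorem stmt_1 (n : ℕ) (hn : Even n) (h4 : 4 < n) :
    ¬ IsMetricHypergraph (basedOn (SimpleGraph.cycleGraph n)) := by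
  rintro ⟨d, hd, heq⟩
  have hsn : ∀ i : Fin n, (none : Option (Fin n)) ≠ some i := fun i h => by cases h
  have hcolS : ∀ u v w : Fin n, u ≠ v → u ≠ w → v ≠ w →
      Col3 d (some u) (some v) (some w) := by
    intro u v w h1 h2 h3
    have hmem : ({some u, some v, some w} : Set (Option (Fin n))) ∈
        basedOn (SimpleGraph.cycleGraph n) :=
      Or.inl ⟨u, v, w, h1, h2, h3, rfl⟩
    rw [heq] at hmem
    exact (mem_metricEdges_iff_s1 hd (by simpa using h1) (by simpa using h2)
      (by simpa using h3)).mp hmem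
  have hadjS : ∀ u v : Fin n, u ≠ v →
      ((SimpleGraph.cycleGraph n).Adj u v ↔ Col3 d none (some u) (some v)) := by
    intro u v huv
    rw [← mem_metricEdges_iff_s1 hd (hsn u) (hsn v) (by simpa using huv), ← heq]
    constructor
    · intro h
      exact Or.inr ⟨u, v, h, rfl⟩
    · rintro (⟨a, b, c, hab, hac, hbc, hset⟩ | ⟨a, b, hab, hset⟩)
      · exfalso
        have hm : (none : Option (Fin n)) ∈ ({some a, some b, some c} : Set (Option (Fin n))) := by
          rw [← hset]; simp
        simpa using hm
      · have hu : u = a ∨ u = b := by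
          have hm : (some u : Option (Fin n)) ∈
              ({none, some a, some b} : Set (Option (Fin n))) := by
            rw [← hset]; simp
          simpa using hm
        have hv : v = a ∨ v = b := by
          have hm : (some v : Option (Fin n)) ∈
              ({none, some a, some b} : Set (Option (Fin n))) := by
            rw [← hset]; simp
          simpa using hm
        rcases hu with rfl | rfl <;> rcases hv with rfl | rfl
        · exact absurd rfl huv
        · exact hab
        · exact hab.symm
        · exact absurd rfl huv
  -- the metric restricted to the cycle vertices
  have hd' : IsMetric (fun i j : Fin n => d (some i) (some j)) :=
    ⟨fun i j => (hd.eq_iff _ _).trans (by simp), fun i j => hd.symm _ _,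
      fun i j k => hd.triangle _ _ _⟩
  obtain ⟨p, hp⟩ := embed_line hd' (by simp; omega)
    (fun a b c h1 h2 h3 => hcolS a b c h1 h2 h3)
  have hpne : ∀ i j : Fin n, i ≠ j → p i ≠ p j := by
    intro i j hij he
    have h1 := d_pos hd (show (some i : Option (Fin n)) ≠ some j by simpa using hij)
    have h2 := hp i j
    rw [he, sub_self, abs_zero] at h2
    linarith
  apply endgame n hn h4 (fun i => p i - d none (some i)) (fun i => p i + d none (some i))
  · intro i
    have := d_pos hd (hsn i)
    show p i - d none (some i) < p i + d none (some i)
    linarith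
  · intro i j hij h
    have := hpne i j hij
    have h' : p i = p j := by
      linarith
    exact this h'
  · intro i j h
    have hij : i ≠ j := by
      intro he; rw [he] at h; linarith
    have hplt : p i < p j := by
      have h1 := d_pos hd (show (some i : Option (Fin n)) ≠ some j by simpa using hij)
      have h2 := hp i j
      change d (some i) (some j) = |p i - p j| at h2
      rcases abs_cases (p i - p j) with ⟨he, _⟩ | ⟨he, _⟩ <;> rw [he] at h2 <;> linarith
    have habs : d (some i) (some j) = p j - p i := by
      have h2 := hp i j
      change d (some i) (some j) = |p i - p j| at h2
      rw [abs_of_neg (by linarith)] at h2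
      linarith
    have t1 := hd.triangle none (some i) (some j)
    have t2 := hd.triangle none (some j) (some i)
    have t3 := hd.triangle (some i) none (some j)
    have s1 := hd.symm (some j) (some i)
    have s2 := hd.symm (some i) none
    refine ⟨by linarith, by linarith, by linarith⟩
  · intro i j hij
    rw [hadjS i j hij]
    have h1 := d_pos hd (show (some i : Option (Fin n)) ≠ some j by simpa using hij)
    have hpij := hp i j
    change d (some i) (some j) = |p i - p j| at hpij
    have hai := d_pos hd (hsn i)
    have haj := d_pos hd (hsn j)
    have s1 := hd.symm (some j) (some i)
    have s2 := hd.symm (some i) none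
    have s3 := hd.symm (some j) none
    have s4 := hd.symm (some i) (some j)
    rcases lt_or_gt_of_ne (hpne i j hij) with hlt | hlt
    · have habs : d (some i) (some j) = p j - p i := by
        rw [abs_of_neg (by linarith)] at hpij
        linarith
      constructor
      · rintro (h | h | h)
        · exact Or.inl (by unfold Col at h; linarith)
        · exact Or.inr (Or.inl (by unfold Col at h; linarith))
        · exact Or.inr (Or.inr (Or.inl (by unfold Col at h; linarith)))
      · rintro (h | h | h | h)
        · exact Or.inl (by unfold Col; linarith)
        · exact Or.inr (Or.inl (by unfold Col; linarith))
        · exact Or.inr (Or.inr (by unfold Col; linarith))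
        · exfalso; linarith
    · have habs : d (some i) (some j) = p i - p j := by
        rw [abs_of_pos (by linarith)] at hpij
        linarith
      constructor
      · rintro (h | h | h)
        · exact Or.inr (Or.inl (by unfold Col at h; linarith))
        · exact Or.inl (by unfold Col at h; linarith)
        · exact Or.inr (Or.inr (Or.inr (by unfold Col at h; linarith)))
      · rintro (h | h | h | h)
        · exact Or.inr (Or.inl (by unfold Col; linarith))
        · exact Or.inl (by unfold Col; linarith)
        · exfalso; linarith
        · exact Or.inr (Or.inr (by unfold Col; linarith))
end

section
/- For every odd integer n greater than one, the 3-uniform hypergraph based on the cycle C_n is metric. -/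
universe u

namespace Stmt4Aux

/-- height of a cycle vertex above the line -/
noncomputable def hgt (n : ℕ) (i : Fin n) : ℝ := ((n : ℝ) - 1) / 2 + ((i.val % 2 : ℕ) : ℝ)

/-- the metric on `Option (Fin n)` -/
noncomputable def cd (n : ℕ) : Option (Fin n) → Option (Fin n) → ℝ
  | none, none => 0
  | none, some i => hgt n i
  | some i, none => hgt n i
  | some i, some j => |(i.val : ℝ) - (j.val : ℝ)|

lemma cd_nn {n : ℕ} : cd n none none = 0 := rfl
lemma cd_ns {n : ℕ} (i : Fin n) : cd n none (some i) = hgt n i := rfl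
lemma cd_sn {n : ℕ} (i : Fin n) : cd n (some i) none = hgt n i := rfl
lemma cd_ss {n : ℕ} (i j : Fin n) : cd n (some i) (some j) = |(i.val : ℝ) - (j.val : ℝ)| := rfl

lemma par01 {n : ℕ} (i : Fin n) : ((i.val % 2 : ℕ) : ℝ) = 0 ∨ ((i.val % 2 : ℕ) : ℝ) = 1 := by
  rcases Nat.mod_two_eq_zero_or_one i.val with h | h <;> simp [h]

lemma hgt_ge_one {n : ℕ} (hn : 3 ≤ n) (i : Fin n) : 1 ≤ hgt n i := by
  have h3 : (3 : ℝ) ≤ n := by exact_mod_cast hn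
  rcases par01 i with h | h <;> unfold hgt <;> rw [h] <;> linarith

lemma hgt_sum {n : ℕ} (i j : Fin n) :
    hgt n i + hgt n j = ((n : ℝ) - 1) + (((i.val % 2 : ℕ) : ℝ) + ((j.val % 2 : ℕ) : ℝ)) := by
  unfold hgt; ring

lemma hgt_sub {n : ℕ} (i j : Fin n) :
    hgt n i - hgt n j = ((i.val % 2 : ℕ) : ℝ) - ((j.val % 2 : ℕ) : ℝ) := by
  unfold hgt; ring

lemma dist_le {n : ℕ} (i j : Fin n) : |(i.val : ℝ) - (j.val : ℝ)| ≤ (n : ℝ) - 1 := by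
  have hi : (i.val : ℝ) + 1 ≤ n := by exact_mod_cast i.isLt
  have hj : (j.val : ℝ) + 1 ≤ n := by exact_mod_cast j.isLt
  have hi0 : (0 : ℝ) ≤ i.val := Nat.cast_nonneg _
  have hj0 : (0 : ℝ) ≤ j.val := Nat.cast_nonneg _
  rw [abs_le]; constructor <;> linarith

lemma dist_ge_one {n : ℕ} {i j : Fin n} (h : i ≠ j) : 1 ≤ |(i.val : ℝ) - (j.val : ℝ)| := by
  have hij : i.val ≠ j.val := fun e => h (Fin.ext e)
  rcases Nat.lt_or_ge i.val j.val with hlt | hge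
  · have : (i.val : ℝ) + 1 ≤ j.val := by exact_mod_cast hlt
    rw [abs_sub_comm, abs_of_nonneg (by linarith)]; linarith
  · have hlt : j.val < i.val := lt_of_le_of_ne hge (Ne.symm hij)
    have : (j.val : ℝ) + 1 ≤ i.val := by exact_mod_cast hlt
    rw [abs_of_nonneg (by linarith)]; linarith

lemma abs_eq_one_cases {a b : ℕ} (h : |(a : ℝ) - (b : ℝ)| = 1) : a = b + 1 ∨ b = a + 1 := by
  rcases le_total (a : ℝ) (b : ℝ) with hle | hle
  · right
    have : (b : ℝ) = a + 1 := by
      rw [abs_sub_comm, abs_of_nonneg (by linarith)] at h; linarith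
    exact_mod_cast this
  · left
    have : (a : ℝ) = b + 1 := by rw [abs_of_nonneg (by linarith)] at h; linarith
    exact_mod_cast this

lemma cd_isMetric {n : ℕ} (hn : 3 ≤ n) : IsMetric (cd n) := by
  constructor
  · rintro (_ | i) (_ | j)
    · simp [cd_nn]
    · simp only [cd_ns]
      constructor
      · intro h; exfalso; have := hgt_ge_one hn j; linarith
      · intro h; exact absurd h (by simp)
    · simp only [cd_sn]
      constructor
      · intro h; exfalso; have := hgt_ge_one hn i; linarith
      · intro h; exact absurd h (by simp)
    · simp only [cd_ss]
      rw [abs_eq_zero, sub_eq_zero]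
      constructor
      · intro h; exact congrArg some (Fin.ext (by exact_mod_cast h))
      · rintro h; injection h with h; rw [h]
  · rintro (_ | i) (_ | j) <;> simp [cd_nn, cd_ns, cd_sn, cd_ss, abs_sub_comm]
  · rintro (_ | x) (_ | y) (_ | z)
    · simp [cd_nn]
    · simp only [cd_nn, cd_ns]; have := hgt_ge_one hn z; linarith
    · simp only [cd_nn, cd_ns, cd_sn]; have := hgt_ge_one hn y; linarith
    · simp only [cd_ns, cd_sn]
      by_cases hyz : y = z
      · subst hyz; rw [cd_ss]; simp
      · have h1 := dist_ge_one hyz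
        have h2 := hgt_sub z y
        have h3 := par01 y; have h4 := par01 z
        rw [cd_ss]
        rcases h3 with h3 | h3 <;> rcases h4 with h4 | h4 <;> rw [h3, h4] at h2 <;> linarith
    · simp only [cd_sn, cd_nn]; linarith [hgt_ge_one hn x]
    · simp only [cd_sn, cd_ns, cd_ss]
      have := dist_le x z
      have := hgt_sum x z
      have h3 := par01 x; have h4 := par01 z
      rcases h3 with h3 | h3 <;> rcases h4 with h4 | h4 <;> rw [h3, h4] at * <;> linarith
    · simp only [cd_ss, cd_sn]
      by_cases hxy : x = y
      · subst hxy; simp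
      · have h1 := dist_ge_one hxy
        have h2 := hgt_sub x y
        have h3 := par01 x; have h4 := par01 y
        rcases h3 with h3 | h3 <;> rcases h4 with h4 | h4 <;> rw [h3, h4] at h2 <;> linarith
    · simp only [cd_ss]; exact abs_sub_le _ _ _

lemma mod_cases {a n : ℕ} (h : a < 2 * n) (hn : 0 < n) : a % n = a ∨ a % n = a - n := by
  rcases Nat.lt_or_ge a n with h1 | h1
  · left; exact Nat.mod_eq_of_lt h1
  · right; rw [Nat.mod_eq_sub_mod h1, Nat.mod_eq_of_lt (by omega)]

lemma adj_iff {n : ℕ} (hn : 3 ≤ n) (u v : Fin n) :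
    (SimpleGraph.cycleGraph n).Adj u v ↔
      (v.val = u.val + 1 ∨ u.val = v.val + 1 ∨ (u.val = 0 ∧ v.val = n - 1) ∨
        (v.val = 0 ∧ u.val = n - 1)) := by
  have hu := u.isLt; have hv := v.isLt
  rw [SimpleGraph.cycleGraph_adj', Fin.sub_def, Fin.sub_def]
  show (n - v.val + u.val) % n = 1 ∨ (n - u.val + v.val) % n = 1 ↔ _
  have key : ∀ s t : ℕ, s < n → t < n →
      ((n - t + s) % n = 1 ↔ (s = t + 1 ∨ (t = n - 1 ∧ s = 0))) := by
    intro s t hs ht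
    rcases Nat.lt_or_ge (n - t + s) n with h | h
    · rw [Nat.mod_eq_of_lt h]; omega
    · rw [Nat.mod_eq_sub_mod h, Nat.mod_eq_of_lt (by omega)]; omega
  rw [key u.val v.val hu hv, key v.val u.val hv hu]
  omega

lemma mbtw_sss {n : ℕ} {a b c : Fin n} (h1 : a.val < b.val) (h2 : b.val < c.val) :
    MBtw (cd n) (some a) (some b) (some c) := by
  have hab : (a.val : ℝ) < b.val := by exact_mod_cast h1
  have hbc : (b.val : ℝ) < c.val := by exact_mod_cast h2
  refine ⟨?_, ?_, ?_, ?_⟩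
  · simp only [ne_eq, Option.some.injEq, Fin.ext_iff]; omega
  · simp only [ne_eq, Option.some.injEq, Fin.ext_iff]; omega
  · simp only [ne_eq, Option.some.injEq, Fin.ext_iff]; omega
  · rw [cd_ss, cd_ss, cd_ss, abs_of_nonpos (by linarith), abs_of_nonpos (by linarith),
      abs_of_nonpos (by linarith)]
    ring

lemma tri_mem {n : ℕ} {a b c : Fin n} (hab : a ≠ b) (hac : a ≠ c) (hbc : b ≠ c) :
    ({some a, some b, some c} : Set (Option (Fin n))) ∈ metricEdges (cd n) := by
  have hab' : a.val ≠ b.val := fun e => hab (Fin.ext e)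
  have hac' : a.val ≠ c.val := fun e => hac (Fin.ext e)
  have hbc' : b.val ≠ c.val := fun e => hbc (Fin.ext e)
  have perm : ∀ x y z : Fin n,
      ({x, y, z} : Set (Fin n)) = ({a, b, c} : Set (Fin n)) →
      x.val < y.val → y.val < z.val →
      ({some a, some b, some c} : Set (Option (Fin n))) ∈ metricEdges (cd n) := by
    intro x y z hset hxy hyz
    refine ⟨some x, some y, some z, ?_, mbtw_sss hxy hyz⟩
    have : ∀ t : Fin n, (t = a ∨ t = b ∨ t = c) ↔ (t = x ∨ t = y ∨ t = z) := by
      intro t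
      have := Set.ext_iff.mp hset t
      simpa [Set.mem_insert_iff] using this.symm
    ext t
    rcases t with _ | t
    · simp [Set.mem_insert_iff]
    · simpa [Set.mem_insert_iff, Option.some.injEq] using this t
  rcases Nat.lt_trichotomy a.val b.val with h1 | h1 | h1
  · rcases Nat.lt_trichotomy b.val c.val with h2 | h2 | h2
    · exact perm a b c rfl h1 h2
    · omega
    · rcases Nat.lt_trichotomy a.val c.val with h3 | h3 | h3
      · exact perm a c b (by ext t; simp only [Set.mem_insert_iff, Set.mem_singleton_iff]; tauto) h3 h2
      · omega
      · exact perm c a b (by ext t; simp only [Set.mem_insert_iff, Set.mem_singleton_iff]; tauto) h3 h1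
  · omega
  · rcases Nat.lt_trichotomy a.val c.val with h2 | h2 | h2
    · exact perm b a c (by ext t; simp only [Set.mem_insert_iff, Set.mem_singleton_iff]; tauto) h1 h2
    · omega
    · rcases Nat.lt_trichotomy b.val c.val with h3 | h3 | h3
      · exact perm b c a (by ext t; simp only [Set.mem_insert_iff, Set.mem_singleton_iff]; tauto) h3 h2
      · omega
      · exact perm c b a (by ext t; simp only [Set.mem_insert_iff, Set.mem_singleton_iff]; tauto) h3 h1

lemma edge_mem_succ {n : ℕ} {a b : Fin n} (h : b.val = a.val + 1) :
    ({none, some a, some b} : Set (Option (Fin n))) ∈ metricEdges (cd n) := by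
  have hd : |(a.val : ℝ) - b.val| = 1 := by
    have : (a.val : ℝ) - b.val = -1 := by rw [h]; push_cast; ring
    rw [this, abs_neg, abs_one]
  have hd' : |(b.val : ℝ) - a.val| = 1 := by rw [abs_sub_comm]; exact hd
  have hne : (some a : Option (Fin n)) ≠ some b := by
    simp only [ne_eq, Option.some.injEq, Fin.ext_iff]; omega
  rcases Nat.mod_two_eq_zero_or_one a.val with ha | ha
  · have hb : b.val % 2 = 1 := by omega
    have ca : ((a.val % 2 : ℕ) : ℝ) = 0 := by rw [ha]; simp
    have cb : ((b.val % 2 : ℕ) : ℝ) = 1 := by rw [hb]; simp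
    refine ⟨none, some a, some b, rfl, by simp, by simp, hne, ?_⟩
    rw [cd_ns, cd_ss, cd_ns, hd]
    unfold hgt; rw [ca, cb]; ring
  · have hb : b.val % 2 = 0 := by omega
    have ca : ((a.val % 2 : ℕ) : ℝ) = 1 := by rw [ha]; simp
    have cb : ((b.val % 2 : ℕ) : ℝ) = 0 := by rw [hb]; simp
    refine ⟨none, some b, some a, ?_, by simp, by simp, Ne.symm hne, ?_⟩
    · ext t; simp only [Set.mem_insert_iff, Set.mem_singleton_iff]; tauto
    · rw [cd_ns, cd_ss, cd_ns, hd']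
      unfold hgt; rw [ca, cb]; ring

lemma cast_pred {n : ℕ} (hn : 3 ≤ n) : ((n - 1 : ℕ) : ℝ) = (n : ℝ) - 1 := by
  rw [Nat.cast_sub (by omega), Nat.cast_one]

lemma edge_mem_wrap {n : ℕ} (hn : 3 ≤ n) (hodd : Odd n) {a b : Fin n}
    (ha : a.val = 0) (hb : b.val = n - 1) :
    ({none, some a, some b} : Set (Option (Fin n))) ∈ metricEdges (cd n) := by
  have hpa : a.val % 2 = 0 := by omega
  have hpb : b.val % 2 = 0 := by rcases hodd with ⟨k, hk⟩; omega
  have ca : ((a.val % 2 : ℕ) : ℝ) = 0 := by rw [hpa]; simp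
  have cb : ((b.val % 2 : ℕ) : ℝ) = 0 := by rw [hpb]; simp
  have hne : (some a : Option (Fin n)) ≠ some b := by
    simp only [ne_eq, Option.some.injEq, Fin.ext_iff]; omega
  refine ⟨some a, none, some b, ?_, Ne.symm (by simp), hne, by simp, ?_⟩
  · ext t; simp only [Set.mem_insert_iff, Set.mem_singleton_iff]; tauto
  · rw [cd_sn, cd_ns, cd_ss]
    have hval : |(a.val : ℝ) - b.val| = (n : ℝ) - 1 := by
      have h1 : (a.val : ℝ) = 0 := by rw [ha]; simp
      have h2 : (b.val : ℝ) = (n : ℝ) - 1 := by rw [hb]; exact cast_pred hn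
      rw [h1, h2, abs_sub_comm]
      rw [sub_zero, abs_of_nonneg (by norm_num; exact_mod_cast by omega : (0:ℝ) ≤ (n:ℝ) - 1)]
    rw [hval]; unfold hgt; rw [ca, cb]; ring

lemma consec_of_eq {n : ℕ} {a b : Fin n} (hab : a ≠ b)
    (heq : hgt n a + |(a.val : ℝ) - b.val| = hgt n b) :
    b.val = a.val + 1 ∨ a.val = b.val + 1 := by
  have h1 := dist_ge_one hab
  have h2 := hgt_sub b a
  have pa := par01 a; have pb := par01 b
  have habs : |(a.val : ℝ) - b.val| = 1 := by
    rcases pa with pa | pa <;> rcases pb with pb | pb <;> rw [pa, pb] at h2 <;> linarith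
  exact (abs_eq_one_cases habs).symm.imp id id |>.symm.imp id id |>.elim (fun h => Or.inr h) (fun h => Or.inl h)

lemma wrap_of_eq {n : ℕ} (hn : 3 ≤ n) {a b : Fin n}
    (heq : hgt n a + hgt n b = |(a.val : ℝ) - b.val|) :
    (a.val = 0 ∧ b.val = n - 1) ∨ (b.val = 0 ∧ a.val = n - 1) := by
  have h1 := dist_le a b
  have h2 := hgt_sum a b
  have pa := par01 a; have pb := par01 b
  have habs : |(a.val : ℝ) - b.val| = (n : ℝ) - 1 := by
    rcases pa with pa | pa <;> rcases pb with pb | pb <;> rw [pa, pb] at h2 <;> linarith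
  have hia := a.isLt; have hib := b.isLt
  rcases le_total (a.val : ℝ) (b.val : ℝ) with hle | hle
  · left
    have hr : (b.val : ℝ) = (a.val : ℝ) + ((n - 1 : ℕ) : ℝ) := by
      rw [abs_sub_comm, abs_of_nonneg (by linarith)] at habs
      rw [cast_pred hn]; linarith
    have hnat : b.val = a.val + (n - 1) := by exact_mod_cast hr
    omega
  · right
    have hr : (a.val : ℝ) = (b.val : ℝ) + ((n - 1 : ℕ) : ℝ) := by
      rw [abs_of_nonneg (by linarith)] at habs
      rw [cast_pred hn]; linarith
    have hnat : a.val = b.val + (n - 1) := by exact_mod_cast hr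
    omega

end Stmt4Aux


/-- For every odd integer `n > 1`, the hypergraph based on `C_n` is metric. -/
theorem stmt_4 (n : ℕ) (hn : Odd n) (h1 : 1 < n) :
    IsMetricHypergraph (basedOn (SimpleGraph.cycleGraph n)) := by
  have hn3 : 3 ≤ n := by rcases hn with ⟨k, hk⟩; omega
  refine ⟨Stmt4Aux.cd n, Stmt4Aux.cd_isMetric hn3, ?_⟩
  apply Set.Subset.antisymm
  · rintro s (⟨u, v, w, huv, huw, hvw, rfl⟩ | ⟨u, v, hadj, rfl⟩)
    · exact Stmt4Aux.tri_mem huv huw hvw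
    · rw [Stmt4Aux.adj_iff hn3] at hadj
      rcases hadj with h | h | ⟨ha, hb⟩ | ⟨ha, hb⟩
      · exact Stmt4Aux.edge_mem_succ h
      · have hmem := Stmt4Aux.edge_mem_succ h
        have hset : ({none, some u, some v} : Set (Option (Fin n))) = {none, some v, some u} := by
          ext t; simp only [Set.mem_insert_iff, Set.mem_singleton_iff]; tauto
        rw [hset]; exact hmem
      · exact Stmt4Aux.edge_mem_wrap hn3 hn ha hb
      · have hmem := Stmt4Aux.edge_mem_wrap hn3 hn ha hb
        have hset : ({none, some u, some v} : Set (Option (Fin n))) = {none, some v, some u} := by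
          ext t; simp only [Set.mem_insert_iff, Set.mem_singleton_iff]; tauto
        rw [hset]; exact hmem
  · rintro s ⟨u, v, w, rfl, h12, h13, h23, heq⟩
    rcases u with _ | a <;> rcases v with _ | b <;> rcases w with _ | c
    · exact absurd rfl h12
    · exact absurd rfl h12
    · exact absurd rfl h13
    · -- {none, some b, some c}
      right
      have hbc : b ≠ c := fun e => h23 (congrArg some e)
      rw [Stmt4Aux.cd_ns, Stmt4Aux.cd_ss, Stmt4Aux.cd_ns] at heq
      have hc := Stmt4Aux.consec_of_eq hbc heq
      refine ⟨b, c, ?_, rfl⟩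
      rw [Stmt4Aux.adj_iff hn3]; tauto
    · exact absurd rfl h23
    · -- {some a, none, some c}
      right
      rw [Stmt4Aux.cd_sn, Stmt4Aux.cd_ns, Stmt4Aux.cd_ss] at heq
      have hw := Stmt4Aux.wrap_of_eq hn3 heq
      refine ⟨a, c, ?_, ?_⟩
      · rw [Stmt4Aux.adj_iff hn3]; tauto
      · ext t; simp only [Set.mem_insert_iff, Set.mem_singleton_iff]; tauto
    · -- {some a, some b, none}
      right
      have hab : a ≠ b := fun e => h12 (congrArg some e)
      rw [Stmt4Aux.cd_ss, Stmt4Aux.cd_sn, Stmt4Aux.cd_sn] at heq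
      have heq' : Stmt4Aux.hgt n b + |(b.val : ℝ) - a.val| = Stmt4Aux.hgt n a := by
        rw [abs_sub_comm]; linarith
      have hc := Stmt4Aux.consec_of_eq (Ne.symm hab) heq'
      refine ⟨a, b, ?_, ?_⟩
      · rw [Stmt4Aux.adj_iff hn3]; tauto
      · ext t; simp only [Set.mem_insert_iff, Set.mem_singleton_iff]; tauto
    · -- all some
      left
      exact ⟨a, b, c, fun e => h12 (congrArg some e), fun e => h13 (congrArg some e),
        fun e => h23 (congrArg some e), rfl⟩
end

section
/- Let M be a metric space and let V be a subset of its ground set with |V| ≥ 5. If every three-point subset of V belongs to E_M, then the elements of V can be enumerated as 0, 1, ..., n−1 with n = |V| in such a way that [uvw] holds whenever 0 ≤ u < v < w < n. -/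
universe u

section Aux

variable {X : Type*}

lemma my_dist_nonneg {d : X → X → ℝ} (hd : IsMetric d) (a b : X) : 0 ≤ d a b := by
  have h1 := hd.triangle a b a
  have h2 : d a a = 0 := (hd.eq_iff a a).mpr rfl
  have h3 := hd.symm a b
  linarith

lemma my_dist_pos {d : X → X → ℝ} (hd : IsMetric d) {a b : X} (h : a ≠ b) : 0 < d a b := by
  rcases lt_or_eq_of_le (my_dist_nonneg hd a b) with h1 | h1
  · exact h1
  · exact absurd ((hd.eq_iff a b).mp h1.symm) h

lemma my_extract {d : X → X → ℝ} (hd : IsMetric d) {x y z : X}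
    (hxy : x ≠ y) (hxz : x ≠ z) (hyz : y ≠ z)
    (hm : ({x, y, z} : Set X) ∈ metricEdges d) :
    d x y + d y z = d x z ∨ d y x + d x z = d y z ∨ d x z + d z y = d x y := by
  obtain ⟨u, v, w, hs, h1, h2, h3, h4⟩ := hm
  have S := hd.symm
  have hu : u = x ∨ u = y ∨ u = z := by
    have : u ∈ ({x, y, z} : Set X) := by rw [hs]; simp
    simpa using this
  have hv : v = x ∨ v = y ∨ v = z := by
    have : v ∈ ({x, y, z} : Set X) := by rw [hs]; simp
    simpa using this
  have hw : w = x ∨ w = y ∨ w = z := by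
    have : w ∈ ({x, y, z} : Set X) := by rw [hs]; simp
    simpa using this
  have h4' : d w v + d v u = d w u := by
    have := S u v; have := S v w; have := S u w; linarith
  rcases hu with rfl | rfl | rfl <;> rcases hv with rfl | rfl | rfl <;>
    rcases hw with rfl | rfl | rfl <;>
    first
      | exact absurd rfl h1
      | exact absurd rfl h2
      | exact absurd rfl h3
      | exact Or.inl h4
      | exact Or.inl h4'
      | exact Or.inr (Or.inl h4)
      | exact Or.inr (Or.inl h4')
      | exact Or.inr (Or.inr h4)
      | exact Or.inr (Or.inr h4')

end Aux

/-- If `V` is a subset of a metric space with `|V| ≥ 5` all of whose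
three-point subsets belong to `E_M`, then the elements of `V` can be
enumerated as `0, …, n-1` so that `[uvw]` whenever `u < v < w`. -/
theorem stmt_5 {X : Type*} (d : X → X → ℝ) (hd : IsMetric d) (V : Finset X)
    (hcard : 5 ≤ V.card)
    (h : ∀ x y z : X, x ∈ V → y ∈ V → z ∈ V → x ≠ y → x ≠ z → y ≠ z →
        ({x, y, z} : Set X) ∈ metricEdges d) :
    ∃ e : Fin V.card ≃ {x // x ∈ V},
      ∀ u v w : Fin V.card, u < v → v < w →
        MBtw d ((e u : { x // x ∈ V}) : X) ((e v : { x // x ∈ V}) : X)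
          ((e w : { x // x ∈ V}) : X) := by
  classical
  have S := hd.symm
  -- a maximal pair
  have hVne : (V ×ˢ V).Nonempty := by
    rw [Finset.nonempty_product]
    have : V.Nonempty := Finset.card_pos.mp (by omega)
    exact ⟨this, this⟩
  obtain ⟨p, hp, hmax'⟩ := Finset.exists_max_image (V ×ˢ V) (fun q => d q.1 q.2) hVne
  set x := p.1 with hxdef
  set y := p.2 with hydef
  have hxV : x ∈ V := (Finset.mem_product.mp hp).1
  have hyV : y ∈ V := (Finset.mem_product.mp hp).2
  have hmax : ∀ a ∈ V, ∀ b ∈ V, d a b ≤ d x y := by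
    intro a ha b hb
    exact hmax' (a, b) (Finset.mem_product.mpr ⟨ha, hb⟩)
  have hxy : x ≠ y := by
    obtain ⟨a, ha, b, hb, hab⟩ := Finset.one_lt_card.mp (by omega : 1 < V.card)
    intro hxyeq
    have h1 : 0 < d a b := my_dist_pos hd hab
    have h2 : d x y = 0 := (hd.eq_iff x y).mpr hxyeq
    have := hmax a ha b hb
    linarith
  -- every point is between any maximal pair
  have btwMax : ∀ x' ∈ V, ∀ y' ∈ V, d x' y' = d x y → x' ≠ y' →
      ∀ z ∈ V, z ≠ x' → z ≠ y' → d x' z + d z y' = d x' y' := by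
    intro x' hx' y' hy' hLm hne z hz hzx hzy
    have hm := h x' z y' hx' hz hy' (Ne.symm hzx) hne hzy
    rcases my_extract hd (Ne.symm hzx) hne hzy hm with h1 | h1 | h1
    · exact h1
    · -- d z x' + d x' y' = d z y' : impossible
      have := hmax z hz y' hy'
      have := my_dist_pos hd (hzx : z ≠ x')
      have := S z x'
      linarith
    · -- d x' y' + d y' z = d x' z : impossible
      have := hmax x' hx' z hz
      have := my_dist_pos hd (Ne.symm hzy : y' ≠ z)
      linarith
  -- the key: distances are differences of distances to x
  have key : ∀ u ∈ V, ∀ v ∈ V, d x u ≤ d x v → d x u + d u v = d x v := by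
    intro u hu v hv huv
    by_cases hux : u = x
    · subst hux
      have h0 : d x x = 0 := (hd.eq_iff x x).mpr rfl
      linarith
    have hux' : u ≠ x := hux
    by_cases huveq : u = v
    · subst huveq
      have h0 : d u u = 0 := (hd.eq_iff u u).mpr rfl
      linarith
    have huveq' : u ≠ v := huveq
    by_cases hvx : v = x
    · subst hvx
      exfalso
      have h0 : d x x = 0 := (hd.eq_iff x x).mpr rfl
      have := my_dist_pos hd (hux'.symm)
      linarith
    have hvx' : v ≠ x := hvx
    by_cases hvy : v = y
    · subst hvy
      exact btwMax x hxV y hyV rfl hxy u hu hux' huveq'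
    have hvy' : v ≠ y := hvy
    by_cases huy : u = y
    · subst huy
      exfalso
      have h1 := hmax x hxV v hv
      have h3 := btwMax x hxV y hyV rfl hxy v hv hvx' hvy'
      have := my_dist_pos hd hvy'
      linarith
    have huy' : u ≠ y := huy
    -- main case: u, v not in {x, y}, u differs from v
    have hbu : d x u + d u y = d x y := btwMax x hxV y hyV rfl hxy u hu hux' huy'
    have hbv : d x v + d v y = d x y := btwMax x hxV y hyV rfl hxy v hv hvx' hvy'
    have hm := h x u v hxV hu hv hux'.symm hvx'.symm huveq'
    rcases my_extract hd hux'.symm hvx'.symm huveq' hm with h1 | h1 | h1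
    · exact h1
    · -- bad case: d u x + d x v = d u v
      exfalso
      have hduv : d u v = d x u + d x v := by have := S u x; linarith
      -- triple {u, v, y}
      have hm2 := h u v y hu hv hyV huveq' huy' hvy'
      have hpu : 0 < d x u := my_dist_pos hd hux'.symm
      have hpv : 0 < d x v := my_dist_pos hd hvx'.symm
      have hpq : d x u + d x v = d x y := by
        rcases my_extract hd huveq' huy' hvy' hm2 with h2 | h2 | h2
        · -- d u v + d v y = d u y
          exfalso; linarith
        · -- d v u + d u y = d v y
          exfalso; have := S v u; linarith
        · -- d u y + d y v = d u v
          have := S y v; linarith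
      have hduvL : d u v = d x y := by linarith
      -- fifth point
      have hScard : ({x, y, u, v} : Finset X).card ≤ 4 := by
        have c1 := Finset.card_insert_le x ({y, u, v} : Finset X)
        have c2 := Finset.card_insert_le y ({u, v} : Finset X)
        have c3 := Finset.card_insert_le u ({v} : Finset X)
        have c4 : ({v} : Finset X).card = 1 := Finset.card_singleton v
        omega
      have hwex : (V \ ({x, y, u, v} : Finset X)).Nonempty := by
        rw [← Finset.card_pos]
        have := Finset.le_card_sdiff ({x, y, u, v} : Finset X) V
        omega
      obtain ⟨w, hw⟩ := hwex
      have hwV : w ∈ V := (Finset.mem_sdiff.mp hw).1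
      have hwS := (Finset.mem_sdiff.mp hw).2
      simp only [Finset.mem_insert, Finset.mem_singleton] at hwS
      push_neg at hwS
      obtain ⟨hwx, hwy, hwu, hwv⟩ := hwS
      -- w between x and y, and between u and v
      have hw1 : d x w + d w y = d x y := btwMax x hxV y hyV rfl hxy w hwV hwx hwy
      have hw2 : d u w + d w v = d u v :=
        btwMax u hu v hv hduvL huveq' w hwV hwu hwv
      -- positivity facts
      have P1 : 0 < d x w := my_dist_pos hd (Ne.symm hwx)
      have P2 : 0 < d u w := my_dist_pos hd (Ne.symm hwu)
      have P3 : 0 < d w y := my_dist_pos hd hwy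
      have P4 : 0 < d w v := my_dist_pos hd hwv
      have P5 : 0 < d u y := my_dist_pos hd huy'
      have P6 : 0 < d v y := my_dist_pos hd hvy'
      -- symmetry facts
      have S1 := S u x; have S2 := S v x; have S3 := S w x
      have S4 := S y u; have S5 := S y v; have S6 := S y w
      have S7 := S w u; have S8 := S w v; have S9 := S v u
      -- four extractions
      have E1 := my_extract hd hux'.symm (Ne.symm hwx) (Ne.symm hwu)
        (h x u w hxV hu hwV hux'.symm (Ne.symm hwx) (Ne.symm hwu))
      have E2 := my_extract hd hvx'.symm (Ne.symm hwx) (Ne.symm hwv)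
        (h x v w hxV hv hwV hvx'.symm (Ne.symm hwx) (Ne.symm hwv))
      have E3 := my_extract hd huy'.symm (Ne.symm hwy) (Ne.symm hwu)
        (h y u w hyV hu hwV huy'.symm (Ne.symm hwy) (Ne.symm hwu))
      have E4 := my_extract hd hvy'.symm (Ne.symm hwy) (Ne.symm hwv)
        (h y v w hyV hv hwV hvy'.symm (Ne.symm hwy) (Ne.symm hwv))
      rcases E1 with e1 | e1 | e1 <;> rcases E2 with e2 | e2 | e2 <;>
        rcases E3 with e3 | e3 | e3 <;> rcases E4 with e4 | e4 | e4 <;>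
        linarith
    · -- d x v + d v u = d x u : forces u = v
      exfalso
      have := my_dist_pos hd huveq'
      have := S v u
      linarith
  -- build the enumeration
  have finj : Function.Injective (fun z : {a // a ∈ V} => d x z.val) := by
    intro a b hab
    simp only at hab
    have h1 := key a.val a.2 b.val b.2 (le_of_eq hab)
    have : d a.val b.val = 0 := by linarith
    exact Subtype.ext ((hd.eq_iff _ _).mp this)
  letI : LinearOrder {a // a ∈ V} := LinearOrder.lift' _ finj
  have hlt : ∀ a b : {a // a ∈ V}, a < b → d x a.val < d x b.val := by
    intro a b hab
    rcases lt_trichotomy (d x a.val) (d x b.val) with h1 | h1 | h1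
    · exact h1
    · exact absurd (finj h1) (ne_of_lt hab)
    · exfalso
      have : b < a := h1
      exact absurd (lt_trans hab this) (lt_irrefl a)
  let iso := monoEquivOfFin {a // a ∈ V} (Fintype.card_coe V)
  refine ⟨iso.toEquiv, ?_⟩
  intro u v w huv hvw
  show MBtw d ((iso u : {a // a ∈ V}) : X) ((iso v : {a // a ∈ V}) : X)
    ((iso w : {a // a ∈ V}) : X)
  have h1 : iso u < iso v := iso.lt_iff_lt.mpr huv
  have h2 : iso v < iso w := iso.lt_iff_lt.mpr hvw
  have f1 := hlt _ _ h1
  have f2 := hlt _ _ h2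
  have k1 := key _ (iso u).2 _ (iso v).2 (le_of_lt f1)
  have k2 := key _ (iso v).2 _ (iso w).2 (le_of_lt f2)
  have k3 := key _ (iso u).2 _ (iso w).2 (le_of_lt (lt_trans f1 f2))
  refine ⟨?_, ?_, ?_, by linarith⟩
  · intro he; rw [he] at f1; exact lt_irrefl _ f1
  · intro he; rw [he] at f1; linarith
  · intro he; rw [he] at f2; exact lt_irrefl _ f2
end

section
/- Let M be a metric space on ground set V ∪ {x}, where x ∉ V and V = {0,1,...,n−1}, and assume [uvw] holds whenever 0 ≤ u < v < w < n. Set D1 = {(j,ℓ) : j < ℓ and [x j ℓ]}, D2 = {(j,ℓ) : j < ℓ and [j x ℓ]}, D3 = {(j,ℓ) : j < ℓ and [j ℓ x]}. Then: (1) (j,ℓ) ∈ D1 and j < k < ℓ imply (j,k) ∈ D1 and (k,ℓ) ∈ D1; (2) (j,ℓ) ∈ D3 and j < k < ℓ imply (j,k) ∈ D3 and (k,ℓ) ∈ D3; (3) (j,ℓ) ∈ D2 and i < j < ℓ imply (i,j) ∈ D3 and (i,ℓ) ∈ D2; (4) (j,ℓ) ∈ D2 and j < ℓ < m imply (j,m)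 ∈ D2 and (ℓ,m) ∈ D1; (5) (i,j) ∈ D1 and (j,k) ∈ D1 imply (i,k) ∈ D1; (6) (i,j) ∈ D3 and (j,k) ∈ D3 imply (i,k) ∈ D3; (7) (i,k) ∈ D2 and (j,k) ∈ D1 imply (i,j) ∈ D2 or (j,i) ∈ D2; (8) (i,k) ∈ D2 and (i,j) ∈ D3 imply (j,k) ∈ D2 or (k,j) ∈ D2. -/
universe u

/-- `D1 = {(j,ℓ) : j < ℓ and [x j ℓ]}` with `x = none`. -/
def Done {n : ℕ} (d : Option (Fin n) → Option (Fin n) → ℝ) : Set (Fin n × Fin n) :=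
  {p | p.1 < p.2 ∧ MBtw d none (some p.1) (some p.2)}

/-- `D2 = {(j,ℓ) : j < ℓ and [j x ℓ]}` with `x = none`. -/
def Dtwo {n : ℕ} (d : Option (Fin n) → Option (Fin n) → ℝ) : Set (Fin n × Fin n) :=
  {p | p.1 < p.2 ∧ MBtw d (some p.1) none (some p.2)}

/-- `D3 = {(j,ℓ) : j < ℓ and [j ℓ x]}` with `x = none`. -/
def Dthree {n : ℕ} (d : Option (Fin n) → Option (Fin n) → ℝ) : Set (Fin n × Fin n) :=
  {p | p.1 < p.2 ∧ MBtw d (some p.1) (some p.2) none}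

/-- Lemma on the structure of `D1, D2, D3` for a metric space on
`V ∪ {x}` with `V = {0, …, n-1}` linearly placed. -/
theorem stmt_6 (n : ℕ) (d : Option (Fin n) → Option (Fin n) → ℝ)
    (hd : IsMetric d)
    (hlin : ∀ u v w : Fin n, u < v → v < w → MBtw d (some u) (some v) (some w)) :
    (∀ j k l : Fin n, (j, l) ∈ Done d → j < k → k < l →
        (j, k) ∈ Done d ∧ (k, l) ∈ Done d) ∧
    (∀ j k l : Fin n, (j, l) ∈ Dthree d → j < k → k < l →
        (j, k) ∈ Dthree d ∧ (k, l) ∈ Dthree d) ∧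
    (∀ i j l : Fin n, (j, l) ∈ Dtwo d → i < j → j < l →
        (i, j) ∈ Dthree d ∧ (i, l) ∈ Dtwo d) ∧
    (∀ j l m : Fin n, (j, l) ∈ Dtwo d → j < l → l < m →
        (j, m) ∈ Dtwo d ∧ (l, m) ∈ Done d) ∧
    (∀ i j k : Fin n, (i, j) ∈ Done d → (j, k) ∈ Done d → (i, k) ∈ Done d) ∧
    (∀ i j k : Fin n, (i, j) ∈ Dthree d → (j, k) ∈ Dthree d → (i, k) ∈ Dthree d) ∧
    (∀ i j k : Fin n, (i, k) ∈ Dtwo d → (j, k) ∈ Done d →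
        (i, j) ∈ Dtwo d ∨ (j, i) ∈ Dtwo d) ∧
    (∀ i j k : Fin n, (i, k) ∈ Dtwo d → (i, j) ∈ Dthree d →
        (j, k) ∈ Dtwo d ∨ (k, j) ∈ Dtwo d) := by
  obtain ⟨heq, hsymm, htri⟩ := hd
  have hnn : ∀ a b : Option (Fin n), 0 ≤ d a b := by
    intro a b
    have h0 : d a a = 0 := (heq a a).mpr rfl
    have h1 := htri a b a
    have h2 := hsymm a b
    linarith
  have hne : ∀ (a b : Fin n), a < b → (some a : Option (Fin n)) ≠ some b := by
    intro a b h hc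
    exact absurd (Option.some.inj hc) h.ne
  have hpos : ∀ (a : Fin n), 0 < d none (some a) := by
    intro a
    rcases lt_or_eq_of_le (hnn none (some a)) with h | h
    · exact h
    · exact absurd ((heq _ _).mp h.symm) (by simp)
  have hpos' : ∀ (a : Fin n), 0 < d (some a) none := by
    intro a
    rw [hsymm]; exact hpos a
  refine ⟨?_, ?_, ?_, ?_, ?_, ?_, ?_, ?_⟩
  · -- (1)
    intro j k l hJL hjk hkl
    obtain ⟨hjl, -, -, -, h1⟩ := hJL
    obtain ⟨-, -, -, hL⟩ := hlin j k l hjk hkl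
    have t1 := htri none (some j) (some k)
    have t2 := htri none (some k) (some l)
    exact ⟨⟨hjk, by simp, by simp, hne j k hjk, by linarith⟩,
           ⟨hkl, by simp, by simp, hne k l hkl, by linarith⟩⟩
  · -- (2)
    intro j k l hJL hjk hkl
    obtain ⟨hjl, -, -, -, h1⟩ := hJL
    obtain ⟨-, -, -, hL⟩ := hlin j k l hjk hkl
    have t1 := htri (some j) (some k) none
    have t2 := htri (some k) (some l) none
    exact ⟨⟨hjk, hne j k hjk, by simp, by simp, by linarith⟩,
           ⟨hkl, hne k l hkl, by simp, by simp, by linarith⟩⟩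
  · -- (3)
    intro i j l hJL hij hjl
    obtain ⟨hjl', -, -, -, h2⟩ := hJL
    obtain ⟨-, -, -, hL⟩ := hlin i j l hij hjl
    have t1 := htri (some i) (some j) none
    have t2 := htri (some i) none (some l)
    exact ⟨⟨hij, hne i j hij, by simp, by simp, by linarith⟩,
           ⟨hij.trans hjl, by simp, hne i l (hij.trans hjl), by simp, by linarith⟩⟩
  · -- (4)
    intro j l m hJL hjl hlm
    obtain ⟨hjl', -, -, -, h2⟩ := hJL
    obtain ⟨-, -, -, hL⟩ := hlin j l m hjl hlm
    have t1 := htri none (some l) (some m)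
    have t2 := htri (some j) none (some m)
    exact ⟨⟨hjl.trans hlm, by simp, hne j m (hjl.trans hlm), by simp, by linarith⟩,
           ⟨hlm, by simp, by simp, hne l m hlm, by linarith⟩⟩
  · -- (5)
    intro i j k hIJ hJK
    obtain ⟨hij, -, -, -, h1⟩ := hIJ
    obtain ⟨hjk, -, -, -, h2⟩ := hJK
    obtain ⟨-, -, -, hL⟩ := hlin i j k hij hjk
    exact ⟨hij.trans hjk, by simp, by simp, hne i k (hij.trans hjk), by linarith⟩
  · -- (6)
    intro i j k hIJ hJK
    obtain ⟨hij, -, -, -, h1⟩ := hIJ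
    obtain ⟨hjk, -, -, -, h2⟩ := hJK
    obtain ⟨-, -, -, hL⟩ := hlin i j k hij hjk
    exact ⟨hij.trans hjk, hne i k (hij.trans hjk), by simp, by simp, by linarith⟩
  · -- (7)
    intro i j k hIK hJK
    obtain ⟨hik, -, -, -, h2⟩ := hIK
    obtain ⟨hjk, -, -, -, h1⟩ := hJK
    rcases lt_trichotomy i j with hij | hij | hij
    · obtain ⟨-, -, -, hL⟩ := hlin i j k hij hjk
      have hs : d (some i) none = d none (some i) := hsymm _ _
      exact Or.inl ⟨hij, by simp, hne i j hij, by simp, by linarith⟩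
    · exfalso
      subst hij
      have hs : d (some i) none = d none (some i) := hsymm _ _
      have := hpos i
      linarith
    · exfalso
      obtain ⟨-, -, -, hL⟩ := hlin j i k hij hik
      have hs : d (some i) none = d none (some i) := hsymm _ _
      have := hpos j
      have := hnn (some j) (some i)
      have := hnn none (some i)
      linarith
  · -- (8)
    intro i j k hIK hIJ
    obtain ⟨hik, -, -, -, h2⟩ := hIK
    obtain ⟨hij, -, -, -, h3⟩ := hIJ
    rcases lt_trichotomy j k with hjk | hjk | hjk
    · obtain ⟨-, -, -, hL⟩ := hlin i j k hij hjk
      exact Or.inl ⟨hjk, by simp, hne j k hjk, by simp, by linarith⟩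
    · exfalso
      subst hjk
      have hs : d (some j) none = d none (some j) := hsymm _ _
      have := hpos j
      linarith
    · exfalso
      obtain ⟨-, -, -, hL⟩ := hlin i k j hik hjk
      have := hpos k
      have := hnn (some k) (some j)
      have := hnn (some j) none
      linarith
end

section
/- Let G be a triangle-free graph with vertex set V = {0,1,...,n−1} and edge set E. Let x be a point outside V and let M be a metric space on the ground set V ∪ {x} such that for all u,v,w ∈ V: (i) u < v < w implies [uvw], and (ii) {u,v} ∈ E if and only if {x,u,v} ∈ E_M. Then E ⊆ { {0,1}, {1,2}, ..., {n−2,n−1}, {n−1,0} }. -/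
universe u

private lemma adj_char' {n : ℕ} (d : Option (Fin n) → Option (Fin n) → ℝ)
    (hd : IsMetric d) (u v : Fin n) (huv : u ≠ v) :
    (({none, some u, some v} : Set (Option (Fin n))) ∈ metricEdges d) ↔
      (d none (some u) + d none (some v) = d (some u) (some v) ∨
       d none (some v) = d none (some u) + d (some u) (some v) ∨
       d none (some u) = d none (some v) + d (some u) (some v)) := by
  constructor
  · rintro ⟨a, b, c, hs, hab, hac, hbc, heq⟩
    have ha : a ∈ ({none, some u, some v} : Set (Option (Fin n))) := by rw [hs]; simp
    have hb : b ∈ ({none, some u, some v} : Set (Option (Fin n))) := by rw [hs]; simp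
    have hc : c ∈ ({none, some u, some v} : Set (Option (Fin n))) := by rw [hs]; simp
    simp only [Set.mem_insert_iff, Set.mem_singleton_iff] at ha hb hc
    have s1 := hd.symm none (some u)
    have s2 := hd.symm none (some v)
    have s3 := hd.symm (some u) (some v)
    rcases ha with rfl | rfl | rfl <;> rcases hb with rfl | rfl | rfl <;>
      rcases hc with rfl | rfl | rfl <;>
      first
        | exact absurd rfl hab
        | exact absurd rfl hac
        | exact absurd rfl hbc
        | exact Or.inl (by linarith)
        | exact Or.inr (Or.inl (by linarith))
        | exact Or.inr (Or.inr (by linarith))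
  · have hnu : (none : Option (Fin n)) ≠ some u := by simp
    have hnv : (none : Option (Fin n)) ≠ some v := by simp
    have hsuv : (some u : Option (Fin n)) ≠ some v := by simpa using huv
    rintro (h | h | h)
    · exact ⟨some u, none, some v,
        by ext z; simp only [Set.mem_insert_iff, Set.mem_singleton_iff]; tauto,
        hnu.symm, hsuv, hnv, by have := hd.symm (some u) none; linarith⟩
    · exact ⟨none, some u, some v, rfl, hnu, hnv, hsuv, by linarith⟩
    · exact ⟨none, some v, some u,
        by ext z; simp only [Set.mem_insert_iff, Set.mem_singleton_iff]; tauto,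
        hnv, hnu, hsuv.symm, by have := hd.symm (some u) (some v); linarith⟩

private lemma key' {n : ℕ} (G : SimpleGraph (Fin n)) (hG : G.CliqueFree 3)
    (d : Option (Fin n) → Option (Fin n) → ℝ) (hd : IsMetric d)
    (hlin : ∀ u v w : Fin n, u < v → v < w → MBtw d (some u) (some v) (some w))
    (hE : ∀ u v : Fin n, G.Adj u v ↔
        ({none, some u, some v} : Set (Option (Fin n))) ∈ metricEdges d)
    (u v : Fin n) (hlt : u < v) (hadj : G.Adj u v) :
    v.val = u.val + 1 ∨ (u.val = 0 ∧ v.val = n - 1) := by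
  have char : ∀ a b : Fin n, a ≠ b → (G.Adj a b ↔
      (d none (some a) + d none (some b) = d (some a) (some b) ∨
       d none (some b) = d none (some a) + d (some a) (some b) ∨
       d none (some a) = d none (some b) + d (some a) (some b))) :=
    fun a b hab => (hE a b).trans (adj_char' d hd a b hab)
  have hne : u ≠ v := hadj.ne
  have hvval := v.isLt
  have huval := u.isLt
  rcases (char u v hne).mp hadj with h | h | h
  · -- x between u and v
    right
    constructor
    · by_contra hu0
      set p : Fin n := ⟨u.val - 1, by have := u.isLt; omega⟩ with hp
      have hpu : p < u := by
        rw [Fin.lt_def]; simp only [hp]; omega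
      have hlin1 := (hlin p u v hpu hlt).2.2.2
      have t1 := hd.triangle (some p) (some u) none
      have t2 := hd.triangle (some p) none (some v)
      have s1 := hd.symm (some p) none
      have s2 := hd.symm (some u) none
      have s3 := hd.symm (some p) (some u)
      have e1 : d none (some p) = d none (some u) + d (some p) (some u) := by linarith
      have e2 : d none (some p) + d none (some v) = d (some p) (some v) := by linarith
      exact hG {p, u, v} (SimpleGraph.is3Clique_triple_iff.mpr
        ⟨(char p u hpu.ne).mpr (Or.inr (Or.inr e1)),
         (char p v (hpu.trans hlt).ne).mpr (Or.inl e2), hadj⟩)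
    · by_contra hvn
      set q : Fin n := ⟨v.val + 1, by omega⟩ with hq
      have hvq : v < q := by rw [Fin.lt_def]; simp only [hq]; omega
      have hlin1 := (hlin u v q hlt hvq).2.2.2
      have t1 := hd.triangle none (some v) (some q)
      have t2 := hd.triangle (some u) none (some q)
      have s1 := hd.symm (some u) none
      have e1 : d none (some q) = d none (some v) + d (some v) (some q) := by linarith
      have e2 : d none (some u) + d none (some q) = d (some u) (some q) := by linarith
      exact hG {u, v, q} (SimpleGraph.is3Clique_triple_iff.mpr
        ⟨hadj, (char u q (hlt.trans hvq).ne).mpr (Or.inl e2),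
         (char v q hvq.ne).mpr (Or.inr (Or.inl e1))⟩)
  · -- u between x and v
    left
    by_contra hw
    have hlt' : u.val + 1 < v.val := by have := Fin.lt_def.mp hlt; omega
    set w : Fin n := ⟨u.val + 1, by omega⟩ with hwdef
    have huw : u < w := by rw [Fin.lt_def]; simp only [hwdef]; omega
    have hwv : w < v := by rw [Fin.lt_def]; simp only [hwdef]; omega
    have hlin1 := (hlin u w v huw hwv).2.2.2
    have t1 := hd.triangle none (some u) (some w)
    have t2 := hd.triangle none (some w) (some v)
    have e1 : d none (some w) = d none (some u) + d (some u) (some w) := by linarith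
    have e2 : d none (some v) = d none (some w) + d (some w) (some v) := by linarith
    exact hG {u, w, v} (SimpleGraph.is3Clique_triple_iff.mpr
      ⟨(char u w huw.ne).mpr (Or.inr (Or.inl e1)), hadj,
       (char w v hwv.ne).mpr (Or.inr (Or.inl e2))⟩)
  · -- v between x and u
    left
    by_contra hw
    have hlt' : u.val + 1 < v.val := by have := Fin.lt_def.mp hlt; omega
    set w : Fin n := ⟨u.val + 1, by omega⟩ with hwdef
    have huw : u < w := by rw [Fin.lt_def]; simp only [hwdef]; omega
    have hwv : w < v := by rw [Fin.lt_def]; simp only [hwdef]; omega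
    have hlin1 := (hlin u w v huw hwv).2.2.2
    have t1 := hd.triangle none (some v) (some w)
    have t2 := hd.triangle none (some w) (some u)
    have s1 := hd.symm (some v) (some w)
    have s2 := hd.symm (some w) (some u)
    have e1 : d none (some u) = d none (some w) + d (some u) (some w) := by linarith
    have e2 : d none (some w) = d none (some v) + d (some w) (some v) := by linarith
    exact hG {u, w, v} (SimpleGraph.is3Clique_triple_iff.mpr
      ⟨(char u w huw.ne).mpr (Or.inr (Or.inr e1)), hadj,
       (char w v hwv.ne).mpr (Or.inr (Or.inr e2))⟩)

/-- If `G` is triangle-free on `V = {0,…,n-1}`, the points of `V` are linearly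
placed in a metric space on `V ∪ {x}`, and the edges of `G` are exactly the
pairs `{u,v}` with `{x,u,v} ∈ E_M`, then every edge of `G` is one of
`{0,1}, {1,2}, …, {n-2,n-1}, {n-1,0}`. -/
theorem stmt_7 (n : ℕ) (G : SimpleGraph (Fin n)) (hG : G.CliqueFree 3)
    (d : Option (Fin n) → Option (Fin n) → ℝ) (hd : IsMetric d)
    (hlin : ∀ u v w : Fin n, u < v → v < w → MBtw d (some u) (some v) (some w))
    (hE : ∀ u v : Fin n, G.Adj u v ↔
        ({none, some u, some v} : Set (Option (Fin n))) ∈ metricEdges d) :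
    ∀ u v : Fin n, G.Adj u v →
      (v.val = (u.val + 1) % n ∨ u.val = (v.val + 1) % n) := by
  intro u v hadj
  have hvval := v.isLt
  have huval := u.isLt
  rcases lt_trichotomy u v with hlt | heq | hlt
  · rcases key' G hG d hd hlin hE u v hlt hadj with h | ⟨h1, h2⟩
    · left; rw [Nat.mod_eq_of_lt (by omega)]; omega
    · right
      have hn : v.val + 1 = n := by omega
      rw [hn, Nat.mod_self]; omega
  · exact absurd heq hadj.ne
  · rcases key' G hG d hd hlin hE v u hlt hadj.symm with h | ⟨h1, h2⟩
    · right; rw [Nat.mod_eq_of_lt (by omega)]; omega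
    · left
      have hn : u.val + 1 = n := by omega
      rw [hn, Nat.mod_self]; omega
end

section
/- The 3-uniform hypergraph based on the complement of the path P_5 on five vertices is not metric. -/
universe u

private lemma metric_pos {α : Type*} {d : α → α → ℝ} (hd : IsMetric d) {u v : α} (h : u ≠ v) :
    0 < d u v := by
  have h0 : d u u = 0 := (hd.eq_iff u u).mpr rfl
  have ht := hd.triangle u v u
  have hs := hd.symm u v
  have hne : d u v ≠ 0 := fun h' => h ((hd.eq_iff u v).mp h')
  have h2 : 0 ≤ d u v := by linarith
  exact lt_of_le_of_ne h2 (Ne.symm hne)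

private lemma mem_me {α : Type*} {d : α → α → ℝ} {u v w : α} (h1 : u ≠ v) (h2 : u ≠ w)
    (h3 : v ≠ w) (he : d u v + d v w = d u w) {s : Set α} (hs : s = {u, v, w}) :
    s ∈ metricEdges d := ⟨u, v, w, hs, h1, h2, h3, he⟩

private lemma btw_cases {α : Type*} {d : α → α → ℝ} (hd : IsMetric d) {A B C : α}
    (h : ({A, B, C} : Set α) ∈ metricEdges d) :
    d A B + d B C = d A C ∨ d B A + d A C = d B C ∨ d A C + d C B = d A B := by
  obtain ⟨u, v, w, hs, huv, huw, hvw, he⟩ := h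
  have hu : u ∈ ({A, B, C} : Set α) := by rw [hs]; simp
  have hv : v ∈ ({A, B, C} : Set α) := by rw [hs]; simp
  have hw : w ∈ ({A, B, C} : Set α) := by rw [hs]; simp
  have sAB := hd.symm A B
  have sAC := hd.symm A C
  have sBC := hd.symm B C
  simp only [Set.mem_insert_iff, Set.mem_singleton_iff] at hu hv hw
  rcases hu with rfl | rfl | rfl <;> rcases hv with rfl | rfl | rfl <;>
      rcases hw with rfl | rfl | rfl <;>
    first
      | exact absurd rfl huv
      | exact absurd rfl huw
      | exact absurd rfl hvw
      | exact Or.inl (by linarith)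
      | exact Or.inr (Or.inl (by linarith))
      | exact Or.inr (Or.inr (by linarith))

set_option maxHeartbeats 4000000

/-- The hypergraph based on the complement of the path `P_5` is not metric. -/
theorem stmt_8 :
    ¬ IsMetricHypergraph (basedOn (SimpleGraph.pathGraph 5)ᶜ) := by
  rintro ⟨d, hd, hE⟩
  have sy_x0 : d none (some 0) = d (some 0) none := hd.symm _ _
  have po_x0 : 0 < d none (some 0) := metric_pos hd (by decide)
  have sy_x1 : d none (some 1) = d (some 1) none := hd.symm _ _
  have po_x1 : 0 < d none (some 1) := metric_pos hd (by decide)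
  have sy_x2 : d none (some 2) = d (some 2) none := hd.symm _ _
  have po_x2 : 0 < d none (some 2) := metric_pos hd (by decide)
  have sy_x3 : d none (some 3) = d (some 3) none := hd.symm _ _
  have po_x3 : 0 < d none (some 3) := metric_pos hd (by decide)
  have sy_x4 : d none (some 4) = d (some 4) none := hd.symm _ _
  have po_x4 : 0 < d none (some 4) := metric_pos hd (by decide)
  have sy_01 : d (some 0) (some 1) = d (some 1) (some 0) := hd.symm _ _
  have po_01 : 0 < d (some 0) (some 1) := metric_pos hd (by decide)
  have sy_02 : d (some 0) (some 2) = d (some 2) (some 0) := hd.symm _ _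
  have po_02 : 0 < d (some 0) (some 2) := metric_pos hd (by decide)
  have sy_03 : d (some 0) (some 3) = d (some 3) (some 0) := hd.symm _ _
  have po_03 : 0 < d (some 0) (some 3) := metric_pos hd (by decide)
  have sy_04 : d (some 0) (some 4) = d (some 4) (some 0) := hd.symm _ _
  have po_04 : 0 < d (some 0) (some 4) := metric_pos hd (by decide)
  have sy_12 : d (some 1) (some 2) = d (some 2) (some 1) := hd.symm _ _
  have po_12 : 0 < d (some 1) (some 2) := metric_pos hd (by decide)
  have sy_13 : d (some 1) (some 3) = d (some 3) (some 1) := hd.symm _ _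
  have po_13 : 0 < d (some 1) (some 3) := metric_pos hd (by decide)
  have sy_14 : d (some 1) (some 4) = d (some 4) (some 1) := hd.symm _ _
  have po_14 : 0 < d (some 1) (some 4) := metric_pos hd (by decide)
  have sy_23 : d (some 2) (some 3) = d (some 3) (some 2) := hd.symm _ _
  have po_23 : 0 < d (some 2) (some 3) := metric_pos hd (by decide)
  have sy_24 : d (some 2) (some 4) = d (some 4) (some 2) := hd.symm _ _
  have po_24 : 0 < d (some 2) (some 4) := metric_pos hd (by decide)
  have sy_34 : d (some 3) (some 4) = d (some 4) (some 3) := hd.symm _ _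
  have po_34 : 0 < d (some 3) (some 4) := metric_pos hd (by decide)
  have tr_x01 : d none (some 1) ≤ d none (some 0) + d (some 0) (some 1) := hd.triangle _ _ _
  have tr_0x1 : d (some 0) (some 1) ≤ d (some 0) none + d none (some 1) := hd.triangle _ _ _
  have tr_x10 : d none (some 0) ≤ d none (some 1) + d (some 1) (some 0) := hd.triangle _ _ _
  have tr_x02 : d none (some 2) ≤ d none (some 0) + d (some 0) (some 2) := hd.triangle _ _ _
  have tr_0x2 : d (some 0) (some 2) ≤ d (some 0) none + d none (some 2) := hd.triangle _ _ _
  have tr_x20 : d none (some 0) ≤ d none (some 2) + d (some 2) (some 0) := hd.triangle _ _ _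
  have tr_x03 : d none (some 3) ≤ d none (some 0) + d (some 0) (some 3) := hd.triangle _ _ _
  have tr_0x3 : d (some 0) (some 3) ≤ d (some 0) none + d none (some 3) := hd.triangle _ _ _
  have tr_x30 : d none (some 0) ≤ d none (some 3) + d (some 3) (some 0) := hd.triangle _ _ _
  have tr_x04 : d none (some 4) ≤ d none (some 0) + d (some 0) (some 4) := hd.triangle _ _ _
  have tr_0x4 : d (some 0) (some 4) ≤ d (some 0) none + d none (some 4) := hd.triangle _ _ _
  have tr_x40 : d none (some 0) ≤ d none (some 4) + d (some 4) (some 0) := hd.triangle _ _ _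
  have tr_x12 : d none (some 2) ≤ d none (some 1) + d (some 1) (some 2) := hd.triangle _ _ _
  have tr_1x2 : d (some 1) (some 2) ≤ d (some 1) none + d none (some 2) := hd.triangle _ _ _
  have tr_x21 : d none (some 1) ≤ d none (some 2) + d (some 2) (some 1) := hd.triangle _ _ _
  have tr_x13 : d none (some 3) ≤ d none (some 1) + d (some 1) (some 3) := hd.triangle _ _ _
  have tr_1x3 : d (some 1) (some 3) ≤ d (some 1) none + d none (some 3) := hd.triangle _ _ _
  have tr_x31 : d none (some 1) ≤ d none (some 3) + d (some 3) (some 1) := hd.triangle _ _ _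
  have tr_x14 : d none (some 4) ≤ d none (some 1) + d (some 1) (some 4) := hd.triangle _ _ _
  have tr_1x4 : d (some 1) (some 4) ≤ d (some 1) none + d none (some 4) := hd.triangle _ _ _
  have tr_x41 : d none (some 1) ≤ d none (some 4) + d (some 4) (some 1) := hd.triangle _ _ _
  have tr_x23 : d none (some 3) ≤ d none (some 2) + d (some 2) (some 3) := hd.triangle _ _ _
  have tr_2x3 : d (some 2) (some 3) ≤ d (some 2) none + d none (some 3) := hd.triangle _ _ _
  have tr_x32 : d none (some 2) ≤ d none (some 3) + d (some 3) (some 2) := hd.triangle _ _ _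
  have tr_x24 : d none (some 4) ≤ d none (some 2) + d (some 2) (some 4) := hd.triangle _ _ _
  have tr_2x4 : d (some 2) (some 4) ≤ d (some 2) none + d none (some 4) := hd.triangle _ _ _
  have tr_x42 : d none (some 2) ≤ d none (some 4) + d (some 4) (some 2) := hd.triangle _ _ _
  have tr_x34 : d none (some 4) ≤ d none (some 3) + d (some 3) (some 4) := hd.triangle _ _ _
  have tr_3x4 : d (some 3) (some 4) ≤ d (some 3) none + d none (some 4) := hd.triangle _ _ _
  have tr_x43 : d none (some 3) ≤ d none (some 4) + d (some 4) (some 3) := hd.triangle _ _ _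
  have tr_012 : d (some 0) (some 2) ≤ d (some 0) (some 1) + d (some 1) (some 2) := hd.triangle _ _ _
  have tr_102 : d (some 1) (some 2) ≤ d (some 1) (some 0) + d (some 0) (some 2) := hd.triangle _ _ _
  have tr_021 : d (some 0) (some 1) ≤ d (some 0) (some 2) + d (some 2) (some 1) := hd.triangle _ _ _
  have tr_013 : d (some 0) (some 3) ≤ d (some 0) (some 1) + d (some 1) (some 3) := hd.triangle _ _ _
  have tr_103 : d (some 1) (some 3) ≤ d (some 1) (some 0) + d (some 0) (some 3) := hd.triangle _ _ _
  have tr_031 : d (some 0) (some 1) ≤ d (some 0) (some 3) + d (some 3) (some 1) := hd.triangle _ _ _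
  have tr_014 : d (some 0) (some 4) ≤ d (some 0) (some 1) + d (some 1) (some 4) := hd.triangle _ _ _
  have tr_104 : d (some 1) (some 4) ≤ d (some 1) (some 0) + d (some 0) (some 4) := hd.triangle _ _ _
  have tr_041 : d (some 0) (some 1) ≤ d (some 0) (some 4) + d (some 4) (some 1) := hd.triangle _ _ _
  have tr_023 : d (some 0) (some 3) ≤ d (some 0) (some 2) + d (some 2) (some 3) := hd.triangle _ _ _
  have tr_203 : d (some 2) (some 3) ≤ d (some 2) (some 0) + d (some 0) (some 3) := hd.triangle _ _ _
  have tr_032 : d (some 0) (some 2) ≤ d (some 0) (some 3) + d (some 3) (some 2) := hd.triangle _ _ _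
  have tr_024 : d (some 0) (some 4) ≤ d (some 0) (some 2) + d (some 2) (some 4) := hd.triangle _ _ _
  have tr_204 : d (some 2) (some 4) ≤ d (some 2) (some 0) + d (some 0) (some 4) := hd.triangle _ _ _
  have tr_042 : d (some 0) (some 2) ≤ d (some 0) (some 4) + d (some 4) (some 2) := hd.triangle _ _ _
  have tr_034 : d (some 0) (some 4) ≤ d (some 0) (some 3) + d (some 3) (some 4) := hd.triangle _ _ _
  have tr_304 : d (some 3) (some 4) ≤ d (some 3) (some 0) + d (some 0) (some 4) := hd.triangle _ _ _
  have tr_043 : d (some 0) (some 3) ≤ d (some 0) (some 4) + d (some 4) (some 3) := hd.triangle _ _ _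
  have tr_123 : d (some 1) (some 3) ≤ d (some 1) (some 2) + d (some 2) (some 3) := hd.triangle _ _ _
  have tr_213 : d (some 2) (some 3) ≤ d (some 2) (some 1) + d (some 1) (some 3) := hd.triangle _ _ _
  have tr_132 : d (some 1) (some 2) ≤ d (some 1) (some 3) + d (some 3) (some 2) := hd.triangle _ _ _
  have tr_124 : d (some 1) (some 4) ≤ d (some 1) (some 2) + d (some 2) (some 4) := hd.triangle _ _ _
  have tr_214 : d (some 2) (some 4) ≤ d (some 2) (some 1) + d (some 1) (some 4) := hd.triangle _ _ _
  have tr_142 : d (some 1) (some 2) ≤ d (some 1) (some 4) + d (some 4) (some 2) := hd.triangle _ _ _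
  have tr_134 : d (some 1) (some 4) ≤ d (some 1) (some 3) + d (some 3) (some 4) := hd.triangle _ _ _
  have tr_314 : d (some 3) (some 4) ≤ d (some 3) (some 1) + d (some 1) (some 4) := hd.triangle _ _ _
  have tr_143 : d (some 1) (some 3) ≤ d (some 1) (some 4) + d (some 4) (some 3) := hd.triangle _ _ _
  have tr_234 : d (some 2) (some 4) ≤ d (some 2) (some 3) + d (some 3) (some 4) := hd.triangle _ _ _
  have tr_324 : d (some 3) (some 4) ≤ d (some 3) (some 2) + d (some 2) (some 4) := hd.triangle _ _ _
  have tr_243 : d (some 2) (some 3) ≤ d (some 2) (some 4) + d (some 4) (some 3) := hd.triangle _ _ _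
  have hn01 : ({none, some 0, some 1} : Set (Option (Fin 5))) ∉ metricEdges d := by
    rw [← hE]
    rintro (⟨u, v, w, -, -, -, hs⟩ | ⟨u, v, hadj, hs⟩)
    · have hx : (none : Option (Fin 5)) ∈ ({some u, some v, some w} : Set (Option (Fin 5))) := by
        rw [← hs]; simp
      simp at hx
    · have hu : (some u : Option (Fin 5)) ∈ ({none, some 0, some 1} : Set (Option (Fin 5))) := by
        rw [hs]; simp
      have hv : (some v : Option (Fin 5)) ∈ ({none, some 0, some 1} : Set (Option (Fin 5))) := by
        rw [hs]; simp
      simp only [Set.mem_insert_iff, Set.mem_singleton_iff, Option.some.injEq, reduceCtorEq,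
        false_or] at hu hv
      rw [SimpleGraph.compl_adj] at hadj
      rcases hu with rfl | rfl <;> rcases hv with rfl | rfl <;>
        first
          | exact hadj.1 rfl
          | exact hadj.2 (SimpleGraph.pathGraph_adj.mpr (by decide))
  have st01a : d none (some 1) < d none (some 0) + d (some 0) (some 1) :=
    lt_of_le_of_ne (hd.triangle _ _ _)
      (Ne.symm fun h => hn01 (mem_me (by decide) (by decide) (by decide) h rfl))
  have st01b : d none (some 0) < d none (some 1) + d (some 1) (some 0) :=
    lt_of_le_of_ne (hd.triangle _ _ _)
      (Ne.symm fun h => hn01 (mem_me (by decide) (by decide) (by decide) h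
        (by rw [Set.pair_comm (some 0 : Option (Fin 5)) (some 1)])))
  have st01c : d (some 0) (some 1) < d (some 0) none + d none (some 1) :=
    lt_of_le_of_ne (hd.triangle _ _ _)
      (Ne.symm fun h => hn01 (mem_me (by decide) (by decide) (by decide) h
        (Set.insert_comm _ _ _)))
  have hn12 : ({none, some 1, some 2} : Set (Option (Fin 5))) ∉ metricEdges d := by
    rw [← hE]
    rintro (⟨u, v, w, -, -, -, hs⟩ | ⟨u, v, hadj, hs⟩)
    · have hx : (none : Option (Fin 5)) ∈ ({some u, some v, some w} : Set (Option (Fin 5))) := by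
        rw [← hs]; simp
      simp at hx
    · have hu : (some u : Option (Fin 5)) ∈ ({none, some 1, some 2} : Set (Option (Fin 5))) := by
        rw [hs]; simp
      have hv : (some v : Option (Fin 5)) ∈ ({none, some 1, some 2} : Set (Option (Fin 5))) := by
        rw [hs]; simp
      simp only [Set.mem_insert_iff, Set.mem_singleton_iff, Option.some.injEq, reduceCtorEq,
        false_or] at hu hv
      rw [SimpleGraph.compl_adj] at hadj
      rcases hu with rfl | rfl <;> rcases hv with rfl | rfl <;>
        first
          | exact hadj.1 rfl
          | exact hadj.2 (SimpleGraph.pathGraph_adj.mpr (by decide))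
  have st12a : d none (some 2) < d none (some 1) + d (some 1) (some 2) :=
    lt_of_le_of_ne (hd.triangle _ _ _)
      (Ne.symm fun h => hn12 (mem_me (by decide) (by decide) (by decide) h rfl))
  have st12b : d none (some 1) < d none (some 2) + d (some 2) (some 1) :=
    lt_of_le_of_ne (hd.triangle _ _ _)
      (Ne.symm fun h => hn12 (mem_me (by decide) (by decide) (by decide) h
        (by rw [Set.pair_comm (some 1 : Option (Fin 5)) (some 2)])))
  have st12c : d (some 1) (some 2) < d (some 1) none + d none (some 2) :=
    lt_of_le_of_ne (hd.triangle _ _ _)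
      (Ne.symm fun h => hn12 (mem_me (by decide) (by decide) (by decide) h
        (Set.insert_comm _ _ _)))
  have hn23 : ({none, some 2, some 3} : Set (Option (Fin 5))) ∉ metricEdges d := by
    rw [← hE]
    rintro (⟨u, v, w, -, -, -, hs⟩ | ⟨u, v, hadj, hs⟩)
    · have hx : (none : Option (Fin 5)) ∈ ({some u, some v, some w} : Set (Option (Fin 5))) := by
        rw [← hs]; simp
      simp at hx
    · have hu : (some u : Option (Fin 5)) ∈ ({none, some 2, some 3} : Set (Option (Fin 5))) := by
        rw [hs]; simp
      have hv : (some v : Option (Fin 5)) ∈ ({none, some 2, some 3} : Set (Option (Fin 5))) := by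
        rw [hs]; simp
      simp only [Set.mem_insert_iff, Set.mem_singleton_iff, Option.some.injEq, reduceCtorEq,
        false_or] at hu hv
      rw [SimpleGraph.compl_adj] at hadj
      rcases hu with rfl | rfl <;> rcases hv with rfl | rfl <;>
        first
          | exact hadj.1 rfl
          | exact hadj.2 (SimpleGraph.pathGraph_adj.mpr (by decide))
  have st23a : d none (some 3) < d none (some 2) + d (some 2) (some 3) :=
    lt_of_le_of_ne (hd.triangle _ _ _)
      (Ne.symm fun h => hn23 (mem_me (by decide) (by decide) (by decide) h rfl))
  have st23b : d none (some 2) < d none (some 3) + d (some 3) (some 2) :=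
    lt_of_le_of_ne (hd.triangle _ _ _)
      (Ne.symm fun h => hn23 (mem_me (by decide) (by decide) (by decide) h
        (by rw [Set.pair_comm (some 2 : Option (Fin 5)) (some 3)])))
  have st23c : d (some 2) (some 3) < d (some 2) none + d none (some 3) :=
    lt_of_le_of_ne (hd.triangle _ _ _)
      (Ne.symm fun h => hn23 (mem_me (by decide) (by decide) (by decide) h
        (Set.insert_comm _ _ _)))
  have hn34 : ({none, some 3, some 4} : Set (Option (Fin 5))) ∉ metricEdges d := by
    rw [← hE]
    rintro (⟨u, v, w, -, -, -, hs⟩ | ⟨u, v, hadj, hs⟩)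
    · have hx : (none : Option (Fin 5)) ∈ ({some u, some v, some w} : Set (Option (Fin 5))) := by
        rw [← hs]; simp
      simp at hx
    · have hu : (some u : Option (Fin 5)) ∈ ({none, some 3, some 4} : Set (Option (Fin 5))) := by
        rw [hs]; simp
      have hv : (some v : Option (Fin 5)) ∈ ({none, some 3, some 4} : Set (Option (Fin 5))) := by
        rw [hs]; simp
      simp only [Set.mem_insert_iff, Set.mem_singleton_iff, Option.some.injEq, reduceCtorEq,
        false_or] at hu hv
      rw [SimpleGraph.compl_adj] at hadj
      rcases hu with rfl | rfl <;> rcases hv with rfl | rfl <;>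
        first
          | exact hadj.1 rfl
          | exact hadj.2 (SimpleGraph.pathGraph_adj.mpr (by decide))
  have st34a : d none (some 4) < d none (some 3) + d (some 3) (some 4) :=
    lt_of_le_of_ne (hd.triangle _ _ _)
      (Ne.symm fun h => hn34 (mem_me (by decide) (by decide) (by decide) h rfl))
  have st34b : d none (some 3) < d none (some 4) + d (some 4) (some 3) :=
    lt_of_le_of_ne (hd.triangle _ _ _)
      (Ne.symm fun h => hn34 (mem_me (by decide) (by decide) (by decide) h
        (by rw [Set.pair_comm (some 3 : Option (Fin 5)) (some 4)])))
  have st34c : d (some 3) (some 4) < d (some 3) none + d none (some 4) :=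
    lt_of_le_of_ne (hd.triangle _ _ _)
      (Ne.symm fun h => hn34 (mem_me (by decide) (by decide) (by decide) h
        (Set.insert_comm _ _ _)))
  have hE02 := btw_cases hd
    (show ({none, some 0, some 2} : Set (Option (Fin 5))) ∈ metricEdges d by
      rw [← hE]
      exact Or.inr ⟨0, 2, (SimpleGraph.compl_adj _ _ _).mpr ⟨by decide,
        fun h => by rw [SimpleGraph.pathGraph_adj] at h; revert h; decide⟩, rfl⟩)
  have hE03 := btw_cases hd
    (show ({none, some 0, some 3} : Set (Option (Fin 5))) ∈ metricEdges d by
      rw [← hE]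
      exact Or.inr ⟨0, 3, (SimpleGraph.compl_adj _ _ _).mpr ⟨by decide,
        fun h => by rw [SimpleGraph.pathGraph_adj] at h; revert h; decide⟩, rfl⟩)
  have hE04 := btw_cases hd
    (show ({none, some 0, some 4} : Set (Option (Fin 5))) ∈ metricEdges d by
      rw [← hE]
      exact Or.inr ⟨0, 4, (SimpleGraph.compl_adj _ _ _).mpr ⟨by decide,
        fun h => by rw [SimpleGraph.pathGraph_adj] at h; revert h; decide⟩, rfl⟩)
  have hE13 := btw_cases hd
    (show ({none, some 1, some 3} : Set (Option (Fin 5))) ∈ metricEdges d by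
      rw [← hE]
      exact Or.inr ⟨1, 3, (SimpleGraph.compl_adj _ _ _).mpr ⟨by decide,
        fun h => by rw [SimpleGraph.pathGraph_adj] at h; revert h; decide⟩, rfl⟩)
  have hE14 := btw_cases hd
    (show ({none, some 1, some 4} : Set (Option (Fin 5))) ∈ metricEdges d by
      rw [← hE]
      exact Or.inr ⟨1, 4, (SimpleGraph.compl_adj _ _ _).mpr ⟨by decide,
        fun h => by rw [SimpleGraph.pathGraph_adj] at h; revert h; decide⟩, rfl⟩)
  have hE24 := btw_cases hd
    (show ({none, some 2, some 4} : Set (Option (Fin 5))) ∈ metricEdges d by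
      rw [← hE]
      exact Or.inr ⟨2, 4, (SimpleGraph.compl_adj _ _ _).mpr ⟨by decide,
        fun h => by rw [SimpleGraph.pathGraph_adj] at h; revert h; decide⟩, rfl⟩)
  have hT012 := btw_cases hd
    (show ({some 0, some 1, some 2} : Set (Option (Fin 5))) ∈ metricEdges d by
      rw [← hE]
      exact Or.inl ⟨0, 1, 2, by decide, by decide, by decide, rfl⟩)
  have hT013 := btw_cases hd
    (show ({some 0, some 1, some 3} : Set (Option (Fin 5))) ∈ metricEdges d by
      rw [← hE]
      exact Or.inl ⟨0, 1, 3, by decide, by decide, by decide, rfl⟩)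
  have hT014 := btw_cases hd
    (show ({some 0, some 1, some 4} : Set (Option (Fin 5))) ∈ metricEdges d by
      rw [← hE]
      exact Or.inl ⟨0, 1, 4, by decide, by decide, by decide, rfl⟩)
  have hT023 := btw_cases hd
    (show ({some 0, some 2, some 3} : Set (Option (Fin 5))) ∈ metricEdges d by
      rw [← hE]
      exact Or.inl ⟨0, 2, 3, by decide, by decide, by decide, rfl⟩)
  have hT024 := btw_cases hd
    (show ({some 0, some 2, some 4} : Set (Option (Fin 5))) ∈ metricEdges d by
      rw [← hE]
      exact Or.inl ⟨0, 2, 4, by decide, by decide, by decide, rfl⟩)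
  have hT034 := btw_cases hd
    (show ({some 0, some 3, some 4} : Set (Option (Fin 5))) ∈ metricEdges d by
      rw [← hE]
      exact Or.inl ⟨0, 3, 4, by decide, by decide, by decide, rfl⟩)
  have hT123 := btw_cases hd
    (show ({some 1, some 2, some 3} : Set (Option (Fin 5))) ∈ metricEdges d by
      rw [← hE]
      exact Or.inl ⟨1, 2, 3, by decide, by decide, by decide, rfl⟩)
  have hT124 := btw_cases hd
    (show ({some 1, some 2, some 4} : Set (Option (Fin 5))) ∈ metricEdges d by
      rw [← hE]
      exact Or.inl ⟨1, 2, 4, by decide, by decide, by decide, rfl⟩)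
  have hT134 := btw_cases hd
    (show ({some 1, some 3, some 4} : Set (Option (Fin 5))) ∈ metricEdges d by
      rw [← hE]
      exact Or.inl ⟨1, 3, 4, by decide, by decide, by decide, rfl⟩)
  have hT234 := btw_cases hd
    (show ({some 2, some 3, some 4} : Set (Option (Fin 5))) ∈ metricEdges d by
      rw [← hE]
      exact Or.inl ⟨2, 3, 4, by decide, by decide, by decide, rfl⟩)
  rcases hE02 with hh | hh | hh
  · rcases hE03 with hh | hh | hh
    · rcases hE13 with hh | hh | hh
      · rcases hT013 with hh | hh | hh
        · linarith
        · linarith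
        · rcases hT023 with hh | hh | hh
          · linarith
          · rcases hE04 with hh | hh | hh
            · rcases hE14 with hh | hh | hh
              · rcases hE24 with hh | hh | hh
                · rcases hT014 with hh | hh | hh
                  · linarith
                  · linarith
                  · rcases hT012 with hh | hh | hh
                    · linarith
                    · linarith
                    · rcases hT024 with hh | hh | hh
                      · rcases hT034 with hh | hh | hh
                        · linarith
                        · rcases hT123 with hh | hh | hh
                          · linarith
                          · linarith
                          · linarith
                        · linarith
                      · linarith
                      · linarith
                · linarith
                · linarith
              · linarith
              · linarith
            · rcases hE14 with hh | hh | hh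
              · linarith
              · rcases hT014 with hh | hh | hh
                · linarith
                · linarith
                · linarith
              · linarith
            · linarith
          · linarith
      · linarith
      · linarith
    · rcases hT013 with hh | hh | hh
      · rcases hE13 with hh | hh | hh
        · linarith
        · linarith
        · rcases hE14 with hh | hh | hh
          · linarith
          · linarith
          · rcases hE04 with hh | hh | hh
            · linarith
            · rcases hT014 with hh | hh | hh
              · rcases hT023 with hh | hh | hh
                · rcases hE24 with hh | hh | hh
                  · linarith
                  · rcases hT012 with hh | hh | hh
                    · linarith
                    · rcases hT024 with hh | hh | hh
                      · linarith
                      · rcases hT034 with hh | hh | hh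
                        · linarith
                        · linarith
                        · linarith
                      · linarith
                    · linarith
                  · linarith
                · linarith
                · linarith
              · linarith
              · linarith
            · linarith
      · linarith
      · linarith
    · linarith
  · rcases hT012 with hh | hh | hh
    · rcases hT023 with hh | hh | hh
      · linarith
      · linarith
      · rcases hE03 with hh | hh | hh
        · rcases hE13 with hh | hh | hh
          · rcases hT013 with hh | hh | hh
            · linarith
            · linarith
            · rcases hT123 with hh | hh | hh
              · linarith
              · rcases hE04 with hh | hh | hh
                · rcases hE14 with hh | hh | hh
                  · rcases hE24 with hh | hh | hh
                    · rcases hT014 with hh | hh | hh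
                      · linarith
                      · linarith
                      · linarith
                    · linarith
                    · linarith
                  · linarith
                  · linarith
                · rcases hE14 with hh | hh | hh
                  · linarith
                  · rcases hT014 with hh | hh | hh
                    · linarith
                    · linarith
                    · linarith
                  · linarith
                · linarith
              · linarith
          · linarith
          · linarith
        · linarith
        · linarith
    · linarith
    · linarith
  · rcases hE03 with hh | hh | hh
    · linarith
    · linarith
    · rcases hE04 with hh | hh | hh
      · linarith
      · linarith
      · rcases hT023 with hh | hh | hh
        · linarith
        · rcases hT034 with hh | hh | hh
          · linarith
          · rcases hE13 with hh | hh | hh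
            · linarith
            · rcases hE14 with hh | hh | hh
              · linarith
              · rcases hT013 with hh | hh | hh
                · linarith
                · rcases hT014 with hh | hh | hh
                  · linarith
                  · rcases hE24 with hh | hh | hh
                    · linarith
                    · linarith
                    · rcases hT012 with hh | hh | hh
                      · linarith
                      · rcases hT024 with hh | hh | hh
                        · rcases hT123 with hh | hh | hh
                          · linarith
                          · linarith
                          · linarith
                        · linarith
                        · linarith
                      · linarith
                  · linarith
                · linarith
              · linarith
            · rcases hE14 with hh | hh | hh
              · linarith
              · linarith
              · rcases hT013 with hh | hh | hh
                · linarith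
                · linarith
                · rcases hT014 with hh | hh | hh
                  · linarith
                  · linarith
                  · rcases hE24 with hh | hh | hh
                    · linarith
                    · linarith
                    · rcases hT012 with hh | hh | hh
                      · linarith
                      · linarith
                      · rcases hT024 with hh | hh | hh
                        · rcases hT123 with hh | hh | hh
                          · linarith
                          · linarith
                          · linarith
                        · linarith
                        · linarith
          · linarith
        · linarith
end
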